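/- arXiv:1504.00596 — 5 statements merged into one kernel-verified Lean document; each statement's English description precedes it below -/
import Mathlib

section
/- Let G be any connected graph on n vertices with colouring ω from colour-set C. Then, for any d ∈ C, m(G,ω,d) ≤ n − N_d(G,ω). -/
open Classical SimpleGraph

/-- The spanning subgraph of `G` whose edges join vertices of equal colour under `ω`.
Its connected components are the monochromatic components of `(G, ω)`. -/
def monoSubgraph {V C : Type*} (G : SimpleGraph V) (ω : V → C) : SimpleGraph V where
  Adj u v := G.Adj u v ∧ ω u = ω v
  symm := ⟨fun u v h => ⟨h.1.symm, h.2.symm⟩⟩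
  loopless := ⟨fun u h => G.loopless.irrefl u h.1⟩

/-- A single flooding move `(v, d)`: every vertex in the monochromatic component of `v`
receives colour `d`. -/
noncomputable def floodMove {V C : Type*} (G : SimpleGraph V) (ω : V → C) (v : V) (d : C) :
    V → C :=
  fun u => if (monoSubgraph G ω).Reachable v u then d else ω u

/-- Apply a sequence of flooding moves, in order. -/
noncomputable def floodSeq {V C : Type*} (G : SimpleGraph V) :
    List (V × C) → (V → C) → (V → C)
  | [], ω => ω
  | m :: ms, ω => floodSeq G ms (floodMove G ω m.1 m.2)

/-- `m(G, ω, d)`: the minimum number of moves needed to give every vertex colour `d`,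
starting from the colouring `ω`. -/
noncomputable def floodCost {V C : Type*} (G : SimpleGraph V) (ω : V → C) (d : C) : ℕ :=
  sInf {k | ∃ ms : List (V × C), ms.length = k ∧ ∀ v, floodSeq G ms ω v = d}

/-- `m(G, ω)`: the minimum over target colours `d ∈ C` of `m(G, ω, d)`. -/
noncomputable def floodCostMin {V C : Type*} (G : SimpleGraph V) (ω : V → C) : ℕ :=
  sInf {k | ∃ d : C, floodCost G ω d = k}

/-- `M_c(G)`: the maximum of `m(G, ω)` over all surjective colourings
`ω : V(G) → {1, …, c}`. -/
noncomputable def maxFloodCost {V : Type*} (c : ℕ) (G : SimpleGraph V) : ℕ :=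
  sSup {k | ∃ ω : V → Fin c, Function.Surjective ω ∧ floodCostMin G ω = k}

/-- For any connected graph `G` on `n` vertices with colouring `ω` from colour-set `C`
and any `d ∈ C`, we have `m(G, ω, d) ≤ n - N_d(G, ω)`. -/
theorem floodCost_le_sub_colourClass {V C : Type*} [Fintype V] (G : SimpleGraph V)
    (hG : G.Connected) (n : ℕ) (hn : Fintype.card V = n) (ω : V → C) (d : C) :
    floodCost G ω d ≤ n - {v : V | ω v = d}.ncard := by
  have key : ∀ (k : ℕ) (ω : V → C), {v : V | ω v ≠ d}.ncard ≤ k →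
      ∃ ms : List (V × C), ms.length ≤ k ∧ ∀ v, floodSeq G ms ω v = d := by
    intro k
    induction k with
    | zero =>
      intro ω h
      refine ⟨[], by simp, fun v => ?_⟩
      simp only [floodSeq]
      by_contra hv
      have : v ∈ ({v : V | ω v ≠ d} : Set V) := hv
      have hne : ({v : V | ω v ≠ d} : Set V).Nonempty := ⟨v, this⟩
      have hfin : ({v : V | ω v ≠ d} : Set V).Finite := Set.toFinite _
      have := (Set.ncard_pos hfin).mpr hne
      omega
    | succ k ih =>
      intro ω h
      by_cases hall : ∀ v, ω v = d
      · exact ⟨[], by simp, fun v => hall v⟩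
      · push_neg at hall
        obtain ⟨v, hv⟩ := hall
        set ω' := floodMove G ω v d with hω'
        have hsub : {u : V | ω' u ≠ d} ⊆ {u : V | ω u ≠ d} \ {v} := by
          intro u hu
          simp only [Set.mem_setOf_eq, hω', floodMove] at hu
          by_cases hr : (monoSubgraph G ω).Reachable v u
          · simp [hr] at hu
          · simp only [if_neg hr] at hu
            refine ⟨hu, ?_⟩
            intro huv
            subst huv
            exact hr (Reachable.refl u)
        have hlt : {u : V | ω' u ≠ d}.ncard ≤ k := by
          have h1 : {u : V | ω' u ≠ d}.ncard ≤ ({u : V | ω u ≠ d} \ {v}).ncard :=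
            Set.ncard_le_ncard hsub (Set.toFinite _)
          have h2 : ({u : V | ω u ≠ d} \ {v}).ncard = {u : V | ω u ≠ d}.ncard - 1 :=
            Set.ncard_diff_singleton_of_mem (show v ∈ {u : V | ω u ≠ d} from hv)
          have h3 : 0 < {u : V | ω u ≠ d}.ncard :=
            (Set.ncard_pos (Set.toFinite _)).mpr ⟨v, hv⟩
          omega
        obtain ⟨ms, hlen, hms⟩ := ih ω' hlt
        exact ⟨(v, d) :: ms, by simpa using Nat.succ_le_succ hlen, fun u => hms u⟩
  have hcompl : {v : V | ω v ≠ d} = {v : V | ω v = d}ᶜ := by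
    ext u; simp
  have hsum : {v : V | ω v = d}.ncard + {v : V | ω v = d}ᶜ.ncard = n := by
    rw [Set.ncard_add_ncard_compl, Nat.card_eq_fintype_card, hn]
  obtain ⟨ms, hlen, hms⟩ := key (n - {v : V | ω v = d}.ncard) ω (by rw [hcompl]; omega)
  calc floodCost G ω d ≤ ms.length := Nat.sInf_le ⟨ms, rfl, hms⟩
    _ ≤ _ := hlen
end

section
/- Let G be any connected graph on n vertices. Then M_c(G) ≤ n − ⌈n/c⌉. -/
open Classical SimpleGraph

private lemma flood_aux {V C : Type*} [Fintype V] (G : SimpleGraph V) (d : C) :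
    ∀ (N : ℕ) (ω : V → C), (Finset.univ.filter fun u => ω u ≠ d).card ≤ N →
      ∃ ms : List (V × C), ms.length ≤ N ∧ ∀ v, floodSeq G ms ω v = d := by
  intro N
  induction N with
  | zero =>
    intro ω h
    refine ⟨[], le_refl 0, fun v => ?_⟩
    show ω v = d
    by_contra hv
    have hv' : v ∈ Finset.univ.filter fun u => ω u ≠ d := by
      simp [Finset.mem_filter, hv]
    have := Finset.card_pos.mpr ⟨v, hv'⟩
    omega
  | succ N ih =>
    intro ω h
    by_cases hall : ∀ v, ω v = d
    · exact ⟨[], by simp, fun v => hall v⟩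
    · push_neg at hall
      obtain ⟨v0, hv0⟩ := hall
      set ω' := floodMove G ω v0 d with hω'
      have hsub : (Finset.univ.filter fun u => ω' u ≠ d) ⊆
          (Finset.univ.filter fun u => ω u ≠ d).erase v0 := by
        intro u hu
        simp only [Finset.mem_filter, Finset.mem_univ, true_and] at hu
        have hnr : ¬ (monoSubgraph G ω).Reachable v0 u := by
          intro hr; exact hu (by simp [hω', floodMove, hr])
        have heq : ω' u = ω u := by simp [hω', floodMove, hnr]
        refine Finset.mem_erase.mpr ⟨?_, ?_⟩
        · rintro rfl; exact hnr (Reachable.refl _)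
        · simp only [Finset.mem_filter, Finset.mem_univ, true_and]
          exact fun he => hu (heq.trans he)
      have h2 : v0 ∈ Finset.univ.filter fun u => ω u ≠ d := by
        simp [Finset.mem_filter, hv0]
      have hcard : (Finset.univ.filter fun u => ω' u ≠ d).card ≤ N := by
        have h1 := Finset.card_le_card hsub
        have h3 := Finset.card_erase_of_mem h2
        have h4 := Finset.card_pos.mpr ⟨v0, h2⟩
        omega
      obtain ⟨ms, hlen, hms⟩ := ih ω' hcard
      exact ⟨(v0, d) :: ms, by simpa using Nat.succ_le_succ hlen, fun v => hms v⟩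

private lemma floodCost_le {V C : Type*} [Fintype V] (G : SimpleGraph V) (ω : V → C) (d : C) :
    floodCost G ω d ≤ (Finset.univ.filter fun u => ω u ≠ d).card := by
  obtain ⟨ms, hlen, hms⟩ :=
    flood_aux G d (Finset.univ.filter fun u => ω u ≠ d).card ω le_rfl
  exact le_trans (Nat.sInf_le ⟨ms, rfl, hms⟩) hlen

/-- For any connected graph `G` on `n` vertices, `M_c(G) ≤ n - ⌈n / c⌉`. -/
theorem maxFloodCost_le_sub_ceilDiv {V : Type*} [Fintype V] (G : SimpleGraph V)
    (hG : G.Connected) (n c : ℕ) (hn : Fintype.card V = n) :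
    maxFloodCost c G ≤ n - (n + c - 1) / c := by
  subst hn
  set n := Fintype.card V
  unfold maxFloodCost
  rcases Set.eq_empty_or_nonempty
      {k | ∃ ω : V → Fin c, Function.Surjective ω ∧ floodCostMin G ω = k} with hS | hS
  · rw [hS, csSup_empty]; exact Nat.zero_le _
  refine csSup_le hS ?_
  rintro k ⟨ω, hsurj, rfl⟩
  rcases Nat.eq_zero_or_pos c with rfl | hc
  · have : {k | ∃ d : Fin 0, floodCost G ω d = k} = ∅ :=
      Set.eq_empty_of_forall_notMem (fun k hk => hk.choose.elim0)
    unfold floodCostMin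
    rw [this, Nat.sInf_empty]
    exact Nat.zero_le _
  · -- pigeonhole: some colour class has size ≥ ⌈n/c⌉
    have hsum : n = ∑ d : Fin c, (Finset.univ.filter fun u => ω u = d).card :=
      Finset.card_eq_sum_card_fiberwise (fun x _ => Finset.mem_univ (ω x))
    haveI : Nonempty (Fin c) := Fin.pos_iff_nonempty.mp hc
    have hne : (Finset.univ : Finset (Fin c)).Nonempty := Finset.univ_nonempty
    have hex : ∃ d ∈ (Finset.univ : Finset (Fin c)),
        n ≤ c * (Finset.univ.filter fun u => ω u = d).card := by
      apply Finset.exists_le_of_sum_le hne (f := fun _ => n)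
      rw [Finset.sum_const, Finset.card_univ, Fintype.card_fin, smul_eq_mul,
        ← Finset.mul_sum, ← hsum, mul_comm]
    obtain ⟨d, -, hd⟩ := hex
    have hceil : (n + c - 1) / c ≤ (Finset.univ.filter fun u => ω u = d).card := by
      rw [Nat.div_le_iff_le_mul_add_pred hc]
      omega
    have hcompl : (Finset.univ.filter fun u => ω u ≠ d).card
        = n - (Finset.univ.filter fun u => ω u = d).card := by
      have h5 := Finset.card_filter_add_card_filter_not
        (s := (Finset.univ : Finset V)) (fun u => ω u = d)
      have h6 : (Finset.univ : Finset V).card = n := Finset.card_univ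
      simp only [ne_eq]
      omega
    calc floodCostMin G ω ≤ floodCost G ω d := Nat.sInf_le ⟨d, rfl⟩
      _ ≤ (Finset.univ.filter fun u => ω u ≠ d).card := by
          have h := floodCost_le G ω d
          convert h using 3 <;> exact Subsingleton.elim _ _
      _ = n - (Finset.univ.filter fun u => ω u = d).card := hcompl
      _ ≤ n - (n + c - 1) / c := Nat.sub_le_sub_left hceil n
end

section
/- Let G be a connected graph with radius r. Then M_c(G) ≤ (c − 1)·r. -/
open Classical SimpleGraph

/-- The radius of a graph: `min_{u ∈ V} max_{v ∈ V} d(u, v)`. -/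
noncomputable def graphRadius {V : Type*} [Fintype V] (G : SimpleGraph V) : ℕ :=
  ⨅ u : V, ⨆ v : V, G.dist u v

section Aux

variable {V : Type*} {C : Type*} (G : SimpleGraph V)

lemma mono_colour_eq {ω : V → C} {a b : V}
    (h : (monoSubgraph G ω).Reachable a b) : ω a = ω b := by
  obtain ⟨p⟩ := h
  induction p with
  | nil => rfl
  | cons h p ih => exact h.2.trans ih

lemma reach_floodMove {ω : V → C} {u a x : V} (d : C)
    (ha : (monoSubgraph G ω).Reachable u a)
    (hax : (monoSubgraph G ω).Reachable a x) :
    (monoSubgraph G (floodMove G ω u d)).Reachable a x := by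
  obtain ⟨p⟩ := hax
  induction p with
  | nil => exact Reachable.refl _
  | @cons a b x hab p ih =>
      have hb : (monoSubgraph G ω).Reachable u b := ha.trans hab.reachable
      refine Reachable.trans ?_ (ih hb)
      refine Adj.reachable ⟨hab.1, ?_⟩
      simp [floodMove, if_pos ha, if_pos hb]

lemma reach_floodMove_adj {ω : V → C} {u x v : V} {d : C}
    (hx : (monoSubgraph G ω).Reachable u x) (hadj : G.Adj x v) (hv : ω v = d) :
    (monoSubgraph G (floodMove G ω u d)).Reachable u v := by
  have h1 := reach_floodMove G d (Reachable.refl u) hx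
  refine h1.trans (Adj.reachable ⟨hadj, ?_⟩)
  by_cases h : (monoSubgraph G ω).Reachable u v <;>
    simp [floodMove, if_pos hx, h, hv]

lemma reach_floodSeq (L : List C) (u : V) (ω : V → C) {x : V}
    (hx : (monoSubgraph G ω).Reachable u x) :
    (monoSubgraph G (floodSeq G (L.map (fun d => (u, d))) ω)).Reachable u x := by
  induction L generalizing ω with
  | nil => exact hx
  | cons d L ih =>
      exact ih _ (reach_floodMove G d (Reachable.refl u) hx)

lemma round_absorb (L : List C) (u : V) (ω : V → C) {x v : V}
    (hx : (monoSubgraph G ω).Reachable u x) (hadj : G.Adj x v) (hv : ω v ∈ L) :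
    (monoSubgraph G (floodSeq G (L.map (fun d => (u, d))) ω)).Reachable u v := by
  induction L generalizing ω with
  | nil => simp at hv
  | cons d L ih =>
      show (monoSubgraph G (floodSeq G (L.map (fun d => (u, d)))
        (floodMove G ω u d))).Reachable u v
      by_cases hd : ω v = d
      · exact reach_floodSeq G L u _ (reach_floodMove_adj G hx hadj hd)
      · have hv' : ω v ∈ L := by
          rcases List.mem_cons.mp hv with h | h
          · exact absurd h hd
          · exact h
        by_cases hr : (monoSubgraph G ω).Reachable u v
        · exact reach_floodSeq G L u _ (reach_floodMove G d (Reachable.refl u) hr)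
        · refine ih (floodMove G ω u d)
            (reach_floodMove G d (Reachable.refl u) hx) ?_
          simpa [floodMove, hr] using hv'

lemma floodSeq_append (ms₁ ms₂ : List (V × C)) (ω : V → C) :
    floodSeq G (ms₁ ++ ms₂) ω = floodSeq G ms₂ (floodSeq G ms₁ ω) := by
  induction ms₁ generalizing ω with
  | nil => rfl
  | cons m ms ih => simp [floodSeq, ih]

lemma exists_adj_dist_le (hG : G.Connected) :
    ∀ (k : ℕ) {u v : V} (p : G.Walk u v), p.length = k + 1 →
      ∃ x, G.Adj x v ∧ G.dist u x ≤ k := by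
  intro k
  induction k with
  | zero =>
      intro u v p hp
      cases p with
      | nil => simp at hp
      | cons h q =>
          simp only [Walk.length_cons, Nat.add_right_cancel_iff] at hp
          have : _ = v := (Walk.eq_of_length_eq_zero hp)
          subst this
          exact ⟨u, h, by simp⟩
  | succ k ih =>
      intro u v p hp
      cases p with
      | nil => simp at hp
      | @cons u w v h q =>
          simp only [Walk.length_cons, Nat.add_right_cancel_iff] at hp
          obtain ⟨x, hxv, hwx⟩ := ih q hp
          refine ⟨x, hxv, ?_⟩
          obtain ⟨q', hq'⟩ := (hG w x).exists_walk_length_eq_dist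
          calc G.dist u x ≤ (Walk.cons h q').length := dist_le _
            _ = 1 + G.dist w x := by simp [hq', Nat.add_comm]
            _ ≤ 1 + k := by omega
            _ = k + 1 := Nat.add_comm _ _

lemma ball_lemma {c : ℕ} (hG : G.Connected) (u : V) (ω : V → Fin c) :
    ∀ k : ℕ, ∃ ms : List (V × Fin c), ms.length = (c - 1) * k ∧
      ∀ v, G.dist u v ≤ k →
        (monoSubgraph G (floodSeq G ms ω)).Reachable u v := by
  intro k
  induction k with
  | zero =>
      refine ⟨[], by simp, fun v hv => ?_⟩
      have : u = v := (hG.dist_eq_zero_iff).mp (Nat.le_zero.mp hv)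
      exact this ▸ Reachable.refl u
  | succ k ih =>
      obtain ⟨ms, hlen, hball⟩ := ih
      set ω1 := floodSeq G ms ω with hω1
      set L := (Finset.univ.erase (ω1 u)).toList with hL
      refine ⟨ms ++ L.map (fun d => (u, d)), ?_, ?_⟩
      · have hLlen : L.length = c - 1 := by
          simp [hL, Finset.length_toList, Finset.card_erase_of_mem]
        simp [hlen, hLlen, Nat.mul_succ]
      · intro v hv
        rw [floodSeq_append]
        rcases Nat.lt_or_ge (G.dist u v) (k + 1) with h | h
        · exact reach_floodSeq G L u ω1 (hball v (Nat.lt_succ_iff.mp h))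
        · have hd : G.dist u v = k + 1 := le_antisymm hv h
          obtain ⟨p, hp⟩ := (hG u v).exists_walk_length_eq_dist
          obtain ⟨x, hxv, hx⟩ := exists_adj_dist_le G hG k p (by omega)
          have hxS := hball x hx
          by_cases he : ω1 v = ω1 u
          · refine reach_floodSeq G L u ω1 (hxS.trans (Adj.reachable ⟨hxv, ?_⟩))
            rw [← mono_colour_eq G hxS, ← he]
          · refine round_absorb G L u ω1 hxS hxv ?_
            simp [hL, Finset.mem_toList, Finset.mem_erase, he]

lemma floodCostMin_le {c : ℕ} [Fintype V] (hG : G.Connected) (r : ℕ)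
    (hr : graphRadius G = r) (ω : V → Fin c) :
    floodCostMin G ω ≤ (c - 1) * r := by
  have hne : Nonempty V := hG.nonempty
  -- find a center
  have hmem : r ∈ Set.range (fun u : V => ⨆ v : V, G.dist u v) := by
    rw [← hr]
    exact Nat.sInf_mem (Set.range_nonempty _)
  obtain ⟨u, hu⟩ := hmem
  have hecc : ∀ v, G.dist u v ≤ r := by
    intro v
    rw [← hu]
    exact le_ciSup (Set.Finite.bddAbove (Set.finite_range _)) v
  obtain ⟨ms, hlen, hball⟩ := ball_lemma G hG u ω r
  set ωf := floodSeq G ms ω with hωf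
  have hall : ∀ v, ωf v = ωf u := fun v => (mono_colour_eq G (hball v (hecc v))).symm
  have h1 : floodCost G ω (ωf u) ≤ (c - 1) * r :=
    Nat.sInf_le ⟨ms, hlen, hall⟩
  calc floodCostMin G ω ≤ floodCost G ω (ωf u) := Nat.sInf_le ⟨ωf u, rfl⟩
    _ ≤ (c - 1) * r := h1

end Aux

/-- For any connected graph `G` with radius `r`, `M_c(G) ≤ (c - 1) * r`. -/
theorem maxFloodCost_le_radius {V : Type*} [Fintype V] (G : SimpleGraph V)
    (hG : G.Connected) (c r : ℕ) (hr : graphRadius G = r) :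
    maxFloodCost c G ≤ (c - 1) * r := by
  by_cases hne : {k | ∃ ω : V → Fin c, Function.Surjective ω ∧ floodCostMin G ω = k}.Nonempty
  · refine csSup_le hne ?_
    rintro k ⟨ω, -, rfl⟩
    exact floodCostMin_le G hG r hr ω
  · rw [maxFloodCost, Set.not_nonempty_iff_eq_empty.mp hne, csSup_empty]
    exact bot_le
end

section
/- Let P be a path on n vertices. Then M_c(P) = n − ⌈n/c⌉. -/
open Classical SimpleGraph

lemma colour_between_walk {n : ℕ} {C : Type*} {ω : Fin n → C} {v u : Fin n}
    (p : (monoSubgraph (pathGraph n) ω).Walk v u) :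
    ∀ w : Fin n, min v.val u.val ≤ w.val → w.val ≤ max v.val u.val → ω w = ω v := by
  induction p with
  | nil =>
    rename_i a
    intro w h1 h2
    have : w = a := Fin.ext (by omega)
    rw [this]
  | cons h p ih =>
    rename_i a b u'
    intro w h1 h2
    have hadj : b.val = a.val + 1 ∨ a.val = b.val + 1 := by
      have := h.1; rw [pathGraph_adj] at this; omega
    by_cases hw : w = a
    · rw [hw]
    · have hwv : w.val ≠ a.val := fun hh => hw (Fin.ext hh)
      have := ih w (by omega) (by omega)
      rw [this, ← h.2]

lemma colour_between {n : ℕ} {C : Type*} {ω : Fin n → C} {v u : Fin n}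
    (h : (monoSubgraph (pathGraph n) ω).Reachable v u) :
    ∀ w : Fin n, min v.val u.val ≤ w.val → w.val ≤ max v.val u.val → ω w = ω v := by
  obtain ⟨p⟩ := h; exact colour_between_walk p

lemma reach_chain {n : ℕ} {C : Type*} {ω : Fin n → C} (a : Fin n) :
    ∀ k (hk : a.val + k < n),
      (∀ j (hj : j ≤ k), ω ⟨a.val + j, by omega⟩ = ω a) →
      (monoSubgraph (pathGraph n) ω).Reachable a ⟨a.val + k, hk⟩ := by
  intro k
  induction k with
  | zero =>
    intro hk _
    have : (⟨a.val + 0, hk⟩ : Fin n) = a := Fin.ext (Nat.add_zero _)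
    rw [this]
  | succ k ih =>
    intro hk hcol
    have hk' : a.val + k < n := by omega
    have R1 := ih hk' (fun j hj => hcol j (by omega))
    have hadj : (monoSubgraph (pathGraph n) ω).Adj ⟨a.val + k, hk'⟩ ⟨a.val + (k+1), hk⟩ := by
      refine ⟨?_, ?_⟩
      · rw [pathGraph_adj]; left; simp; omega
      · rw [hcol k (by omega), hcol (k+1) (by omega)]
    exact R1.trans hadj.reachable

lemma reach_of_colour {n : ℕ} {C : Type*} {ω : Fin n → C} {v u : Fin n}
    (h : ∀ w : Fin n, min v.val u.val ≤ w.val → w.val ≤ max v.val u.val → ω w = ω v) :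
    (monoSubgraph (pathGraph n) ω).Reachable v u := by
  rcases le_or_gt v.val u.val with hvu | hvu
  · have hk : v.val + (u.val - v.val) < n := by omega
    have := reach_chain (ω := ω) v (u.val - v.val) hk
      (fun j hj => h _ (by simp only [Fin.val_mk]; omega) (by simp only [Fin.val_mk]; omega))
    have he : (⟨v.val + (u.val - v.val), hk⟩ : Fin n) = u := Fin.ext (show v.val + (u.val - v.val) = u.val by omega)
    rwa [he] at this
  · have huv : ω u = ω v := h u (by omega) (by omega)
    have hk : u.val + (v.val - u.val) < n := by omega
    have := reach_chain (ω := ω) u (v.val - u.val) hk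
      (fun j hj => by rw [huv]; exact h _ (by simp only [Fin.val_mk]; omega) (by simp only [Fin.val_mk]; omega))
    have he : (⟨u.val + (v.val - u.val), hk⟩ : Fin n) = v := Fin.ext (show u.val + (v.val - u.val) = v.val by omega)
    rw [he] at this
    exact this.symm

lemma reach_colour {n : ℕ} {C : Type*} {ω : Fin n → C} {v u : Fin n}
    (h : (monoSubgraph (pathGraph n) ω).Reachable v u) : ω u = ω v :=
  colour_between h u (by omega) (by omega)

lemma reach_convex {n : ℕ} {C : Type*} {ω : Fin n → C} {v u u' w : Fin n}
    (h1 : (monoSubgraph (pathGraph n) ω).Reachable v u)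
    (h2 : (monoSubgraph (pathGraph n) ω).Reachable v u')
    (hw : u.val ≤ w.val) (hw' : w.val ≤ u'.val) :
    (monoSubgraph (pathGraph n) ω).Reachable v w := by
  apply reach_of_colour
  intro t ht1 ht2
  rcases le_or_gt v.val w.val with hvw | hvw
  · exact colour_between h2 t (by omega) (by omega)
  · exact colour_between h1 t (by omega) (by omega)

/-- In any interval `[l, h]` of naturals, the number of elements with residue `x` mod `c`
exceeds the number with residue `y` by at most one. -/
lemma mod_count_balance (l h c x y : ℕ) (hc : 0 < c) (hx : x < c) (hy : y < c) :
    ((Finset.Icc l h).filter (fun u => u % c = x)).card ≤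
      ((Finset.Icc l h).filter (fun u => u % c = y)).card + 1 := by
  set δ : ℕ := if y ≤ x then x - y else c + x - y with hδ
  have hδc : δ < c := by rw [hδ]; split <;> omega
  have hmod : ∀ u, u % c = x → δ ≤ u → (u - δ) % c = y := by
    intro u hu hdu
    obtain ⟨k, hk⟩ : ∃ k, u = c * k + x :=
      ⟨u / c, by conv_lhs => rw [← Nat.div_add_mod u c, hu]⟩
    subst hk
    rw [hδ] at hdu ⊢
    by_cases hyx : y ≤ x
    · rw [if_pos hyx] at hdu ⊢
      have : c * k + x - (x - y) = c * k + y := by omega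
      rw [this, Nat.mul_add_mod]
      exact Nat.mod_eq_of_lt hy
    · rw [if_neg hyx] at hdu ⊢
      rcases k with _ | k'
      · simp at hdu; omega
      · have hmul : c * (k' + 1) = c * k' + c := by ring
        rw [hmul] at hdu ⊢
        have : c * k' + c + x - (c + x - y) = c * k' + y := by omega
        rw [this, Nat.mul_add_mod]
        exact Nat.mod_eq_of_lt hy
  have hstep : ((Finset.Icc l h).filter (fun u => u % c = x)).card ≤
      (insert (h + 1) ((Finset.Icc l h).filter (fun u => u % c = y))).card := by
    apply Finset.card_le_card_of_injOn (fun u => if l + δ ≤ u then u - δ else h + 1)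
    · intro u hu
      simp only [Finset.mem_coe, Finset.mem_filter, Finset.mem_Icc] at hu
      by_cases hlu : l + δ ≤ u
      · simp only [Finset.mem_coe]; rw [if_pos hlu]
        apply Finset.mem_insert_of_mem
        simp only [Finset.mem_filter, Finset.mem_Icc]
        exact ⟨⟨by omega, by omega⟩, hmod u hu.2 (by omega)⟩
      · simp only [Finset.mem_coe]; rw [if_neg hlu]
        exact Finset.mem_insert_self _ _
    · intro u₁ hu₁ u₂ hu₂ heq
      simp only [Finset.mem_coe, Finset.mem_filter, Finset.mem_Icc] at hu₁ hu₂
      simp only [] at heq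
      split_ifs at heq with h1 h2 h2
      · omega
      · omega
      · omega
      · rcases le_or_gt u₁ u₂ with hle | hlt
        · have hmodeq : u₁ ≡ u₂ [MOD c] := by
            unfold Nat.ModEq; rw [hu₁.2, hu₂.2]
          have hdvd : c ∣ u₂ - u₁ := (Nat.modEq_iff_dvd' hle).mp hmodeq
          rcases Nat.eq_zero_or_pos (u₂ - u₁) with h0 | hpos
          · omega
          · have := Nat.le_of_dvd hpos hdvd; omega
        · have hmodeq : u₂ ≡ u₁ [MOD c] := by
            unfold Nat.ModEq; rw [hu₁.2, hu₂.2]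
          have hdvd : c ∣ u₁ - u₂ := (Nat.modEq_iff_dvd' (by omega)).mp hmodeq
          have := Nat.le_of_dvd (by omega) hdvd; omega
  exact hstep.trans (Finset.card_insert_le _ _)

lemma reachSet_image {n : ℕ} {C : Type*} (ω : Fin n → C) (v : Fin n) :
    ∃ lo hi : ℕ,
      (Finset.univ.filter fun u : Fin n =>
        (monoSubgraph (pathGraph n) ω).Reachable v u).image Fin.val = Finset.Icc lo hi := by
  set B := Finset.univ.filter fun u : Fin n =>
    (monoSubgraph (pathGraph n) ω).Reachable v u with hB
  have hv : v ∈ B := by simp only [hB, Finset.mem_filter, Finset.mem_univ, true_and]; exact Reachable.refl v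
  have hne : (B.image Fin.val).Nonempty := ⟨v.val, Finset.mem_image_of_mem _ hv⟩
  refine ⟨(B.image Fin.val).min' hne, (B.image Fin.val).max' hne, ?_⟩
  ext m
  simp only [Finset.mem_Icc]
  constructor
  · intro hm
    exact ⟨Finset.min'_le _ _ hm, Finset.le_max' _ _ hm⟩
  · rintro ⟨h1, h2⟩
    obtain ⟨ulo, hulo, hulov⟩ := Finset.mem_image.mp ((B.image Fin.val).min'_mem hne)
    obtain ⟨uhi, huhi, huhiv⟩ := Finset.mem_image.mp ((B.image Fin.val).max'_mem hne)
    simp only [hB, Finset.mem_filter, Finset.mem_univ, true_and] at hulo huhi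
    have hmn : m < n := by
      have := uhi.isLt; omega
    have : (⟨m, hmn⟩ : Fin n) ∈ B := by
      simp only [hB, Finset.mem_filter, Finset.mem_univ, true_and]
      exact reach_convex hulo huhi (show ulo.val ≤ m by omega) (show m ≤ uhi.val by omega)
    exact Finset.mem_image.mpr ⟨⟨m, hmn⟩, this, rfl⟩

/-- The crucial step: relative to the cyclic base colouring, a single flood move
increases the number of "changed" vertices by at most one. -/
lemma hamming_step {n c : ℕ} (hc : 0 < c) (ω₀ ω : Fin n → Fin c)
    (hω₀ : ∀ u : Fin n, (ω₀ u).val = u.val % c) (v : Fin n) (e : Fin c) :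
    (Finset.univ.filter fun u : Fin n => floodMove (pathGraph n) ω v e u ≠ ω₀ u).card ≤
      (Finset.univ.filter fun u : Fin n => ω u ≠ ω₀ u).card + 1 := by
  classical
  have hq : ∀ x : Fin c,
      ((Finset.univ.filter fun u : Fin n =>
          (monoSubgraph (pathGraph n) ω).Reachable v u).filter fun u => ω₀ u = x).card =
        (((Finset.univ.filter fun u : Fin n =>
          (monoSubgraph (pathGraph n) ω).Reachable v u).image Fin.val).filter
            fun m => m % c = x.val).card := by
    intro x
    have himage : ((Finset.univ.filter fun u : Fin n =>
          (monoSubgraph (pathGraph n) ω).Reachable v u).filter fun u => ω₀ u = x).image Fin.val =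
        (((Finset.univ.filter fun u : Fin n =>
          (monoSubgraph (pathGraph n) ω).Reachable v u).image Fin.val).filter
            fun m => m % c = x.val) := by
      ext m
      simp only [Finset.mem_image, Finset.mem_filter, Finset.mem_univ, true_and]
      constructor
      · rintro ⟨u, ⟨hu, hux⟩, rfl⟩
        exact ⟨⟨u, hu, rfl⟩, by rw [← hω₀ u, hux]⟩
      · rintro ⟨⟨u, hu, rfl⟩, hm⟩
        exact ⟨u, ⟨hu, Fin.ext (by rw [hω₀ u, hm])⟩, rfl⟩
    rw [← himage, Finset.card_image_of_injective _ Fin.val_injective]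
  have hqbal : ((Finset.univ.filter fun u : Fin n =>
        (monoSubgraph (pathGraph n) ω).Reachable v u).filter fun u => ω₀ u = ω v).card ≤
      ((Finset.univ.filter fun u : Fin n =>
        (monoSubgraph (pathGraph n) ω).Reachable v u).filter fun u => ω₀ u = e).card + 1 := by
    obtain ⟨lo, hi, himg⟩ := reachSet_image ω v
    rw [hq, hq, himg]
    exact mod_count_balance lo hi c (ω v).val e.val hc (ω v).isLt e.isLt
  have hsplit : ∀ f : Fin n → Fin c,
      (Finset.univ.filter fun u : Fin n => f u ≠ ω₀ u).card =
        (((Finset.univ.filter fun u : Fin n =>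
            (monoSubgraph (pathGraph n) ω).Reachable v u)).filter fun u => f u ≠ ω₀ u).card +
        ((Finset.univ.filter fun u : Fin n =>
            ¬ (monoSubgraph (pathGraph n) ω).Reachable v u).filter fun u => f u ≠ ω₀ u).card := by
    intro f
    have hun : ((Finset.univ.filter fun u : Fin n =>
          (monoSubgraph (pathGraph n) ω).Reachable v u).filter fun u => f u ≠ ω₀ u) ∪
        ((Finset.univ.filter fun u : Fin n =>
          ¬ (monoSubgraph (pathGraph n) ω).Reachable v u).filter fun u => f u ≠ ω₀ u) =
        (Finset.univ.filter fun u : Fin n => f u ≠ ω₀ u) := by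
      ext u
      simp only [Finset.mem_union, Finset.mem_filter, Finset.mem_univ, true_and]
      tauto
    have hdis : Disjoint ((Finset.univ.filter fun u : Fin n =>
          (monoSubgraph (pathGraph n) ω).Reachable v u).filter fun u => f u ≠ ω₀ u)
        ((Finset.univ.filter fun u : Fin n =>
          ¬ (monoSubgraph (pathGraph n) ω).Reachable v u).filter fun u => f u ≠ ω₀ u) := by
      rw [Finset.disjoint_left]
      intro u h1 h2
      simp only [Finset.mem_filter, Finset.mem_univ, true_and] at h1 h2
      exact h2.1 h1.1
    rw [← hun, Finset.card_union_of_disjoint hdis]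
  rw [hsplit (floodMove (pathGraph n) ω v e), hsplit ω]
  have houter : ((Finset.univ.filter fun u : Fin n =>
        ¬ (monoSubgraph (pathGraph n) ω).Reachable v u).filter
          fun u => floodMove (pathGraph n) ω v e u ≠ ω₀ u) =
      ((Finset.univ.filter fun u : Fin n =>
        ¬ (monoSubgraph (pathGraph n) ω).Reachable v u).filter fun u => ω u ≠ ω₀ u) := by
    apply Finset.filter_congr
    intro u hu
    simp only [Finset.mem_filter, Finset.mem_univ, true_and] at hu
    simp only [floodMove, if_neg hu]
  rw [houter]
  have hinner_new : ((Finset.univ.filter fun u : Fin n =>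
        (monoSubgraph (pathGraph n) ω).Reachable v u).filter
          fun u => floodMove (pathGraph n) ω v e u ≠ ω₀ u) =
      ((Finset.univ.filter fun u : Fin n =>
        (monoSubgraph (pathGraph n) ω).Reachable v u).filter fun u => e ≠ ω₀ u) := by
    apply Finset.filter_congr
    intro u hu
    simp only [Finset.mem_filter, Finset.mem_univ, true_and] at hu
    simp only [floodMove, if_pos hu]
  have hinner_old : ((Finset.univ.filter fun u : Fin n =>
        (monoSubgraph (pathGraph n) ω).Reachable v u).filter fun u => ω u ≠ ω₀ u) =
      ((Finset.univ.filter fun u : Fin n =>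
        (monoSubgraph (pathGraph n) ω).Reachable v u).filter fun u => ω v ≠ ω₀ u) := by
    apply Finset.filter_congr
    intro u hu
    simp only [Finset.mem_filter, Finset.mem_univ, true_and] at hu
    rw [reach_colour hu]
  rw [hinner_new, hinner_old]
  have hcompl : ∀ x : Fin c, ((Finset.univ.filter fun u : Fin n =>
        (monoSubgraph (pathGraph n) ω).Reachable v u).filter fun u => x ≠ ω₀ u).card +
      ((Finset.univ.filter fun u : Fin n =>
        (monoSubgraph (pathGraph n) ω).Reachable v u).filter fun u => ω₀ u = x).card =
      (Finset.univ.filter fun u : Fin n =>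
        (monoSubgraph (pathGraph n) ω).Reachable v u).card := by
    intro x
    have hbase := Finset.card_filter_add_card_filter_not
      (s := Finset.univ.filter fun u : Fin n => (monoSubgraph (pathGraph n) ω).Reachable v u)
      (p := fun u => ω₀ u = x)
    have h1 : ((Finset.univ.filter fun u : Fin n =>
          (monoSubgraph (pathGraph n) ω).Reachable v u).filter fun u => x ≠ ω₀ u) =
        ((Finset.univ.filter fun u : Fin n =>
          (monoSubgraph (pathGraph n) ω).Reachable v u).filter fun u => ¬ (ω₀ u = x)) := by
      apply Finset.filter_congr
      intro u _
      constructor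
      · intro h h2; exact h h2.symm
      · intro h h2; exact h h2.symm
    rw [h1]; omega
  have h1 := hcompl e
  have h2 := hcompl (ω v)
  omega

lemma hamming_seq {n c : ℕ} (hc : 0 < c) (ω₀ : Fin n → Fin c)
    (hω₀ : ∀ u : Fin n, (ω₀ u).val = u.val % c) :
    ∀ (ms : List (Fin n × Fin c)) (ω : Fin n → Fin c),
      (Finset.univ.filter fun u : Fin n => floodSeq (pathGraph n) ms ω u ≠ ω₀ u).card ≤
        (Finset.univ.filter fun u : Fin n => ω u ≠ ω₀ u).card + ms.length := by
  intro ms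
  induction ms with
  | nil => intro ω; exact Nat.le_add_right _ _
  | cons m ms ih =>
    intro ω
    calc (Finset.univ.filter fun u : Fin n =>
          floodSeq (pathGraph n) (m :: ms) ω u ≠ ω₀ u).card
        = (Finset.univ.filter fun u : Fin n =>
            floodSeq (pathGraph n) ms (floodMove (pathGraph n) ω m.1 m.2) u ≠ ω₀ u).card := rfl
      _ ≤ (Finset.univ.filter fun u : Fin n =>
            floodMove (pathGraph n) ω m.1 m.2 u ≠ ω₀ u).card + ms.length := ih _
      _ ≤ ((Finset.univ.filter fun u : Fin n => ω u ≠ ω₀ u).card + 1) + ms.length := by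
          have := hamming_step hc ω₀ ω hω₀ m.1 m.2
          omega
      _ = (Finset.univ.filter fun u : Fin n => ω u ≠ ω₀ u).card + (m :: ms).length := by
          simp [List.length_cons]; omega

/-- Number of vertices of the cyclic colouring with a given colour is at most `⌈n/c⌉`. -/
lemma cyclic_count_le {n c : ℕ} (hc : 0 < c) (hcn : c ≤ n) (ω₀ : Fin n → Fin c)
    (hω₀ : ∀ u : Fin n, (ω₀ u).val = u.val % c) (d : Fin c) :
    (Finset.univ.filter fun u : Fin n => ω₀ u = d).card ≤ (n + c - 1) / c := by
  have hN : (n + c - 1) / c = (n - 1) / c + 1 := by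
    have : n + c - 1 = (n - 1) + c := by omega
    rw [this, Nat.add_div_right _ hc]
  rw [hN]
  have : (Finset.univ.filter fun u : Fin n => ω₀ u = d).card ≤
      (Finset.range ((n - 1) / c + 1)).card := by
    apply Finset.card_le_card_of_injOn (fun u => u.val / c)
    · intro u hu
      simp only [Finset.mem_coe, Finset.mem_filter, Finset.mem_univ, true_and] at hu
      simp only [Finset.mem_coe, Finset.mem_range]
      have h1 : u.val ≤ n - 1 := by have := u.isLt; omega
      have := Nat.div_le_div_right (c := c) h1
      omega
    · intro u₁ hu₁ u₂ hu₂ heq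
      simp only [Finset.mem_coe, Finset.mem_filter, Finset.mem_univ, true_and] at hu₁ hu₂
      apply Fin.ext
      have e1 := Nat.div_add_mod u₁.val c
      have e2 := Nat.div_add_mod u₂.val c
      have m1 : u₁.val % c = d.val := by rw [← hω₀ u₁, hu₁]
      have m2 : u₂.val % c = d.val := by rw [← hω₀ u₂, hu₂]
      simp only [] at heq
      have : c * (u₁.val / c) = c * (u₂.val / c) := by rw [heq]
      omega
  simpa using this

/-- Lower bound: any sequence flooding the cyclic colouring needs at least `n - ⌈n/c⌉` moves. -/
lemma cyclic_lower {n c : ℕ} (hc : 0 < c) (hcn : c ≤ n) (ω₀ : Fin n → Fin c)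
    (hω₀ : ∀ u : Fin n, (ω₀ u).val = u.val % c) (d : Fin c)
    (ms : List (Fin n × Fin c)) (hms : ∀ u, floodSeq (pathGraph n) ms ω₀ u = d) :
    n - (n + c - 1) / c ≤ ms.length := by
  have h0 : (Finset.univ.filter fun u : Fin n => ω₀ u ≠ ω₀ u).card = 0 := by
    simp
  have hseq := hamming_seq hc ω₀ hω₀ ms ω₀
  rw [h0] at hseq
  have hfin : (Finset.univ.filter fun u : Fin n => floodSeq (pathGraph n) ms ω₀ u ≠ ω₀ u) =
      (Finset.univ.filter fun u : Fin n => ¬ (ω₀ u = d)) := by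
    apply Finset.filter_congr
    intro u _
    rw [hms u]
    constructor
    · intro h h2; exact h h2.symm
    · intro h h2; exact h h2.symm
  rw [hfin] at hseq
  have hcompl := Finset.card_filter_add_card_filter_not
    (s := (Finset.univ : Finset (Fin n))) (p := fun u => ω₀ u = d)
  have hcount := cyclic_count_le hc hcn ω₀ hω₀ d
  have hcard : (Finset.univ : Finset (Fin n)).card = n := by simp
  omega

lemma boundary_of_walk {n : ℕ} {C : Type*} {ω : Fin n → C} {d : C} :
    ∀ {a b : Fin n} (_ : (pathGraph n).Walk a b), ω a = d → ω b ≠ d →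
      ∃ x y : Fin n, (pathGraph n).Adj x y ∧ ω x ≠ d ∧ ω y = d := by
  intro a b p
  induction p with
  | nil => intro h1 h2; exact absurd h1 h2
  | cons hadj p ih =>
    rename_i u v w
    intro h1 h2
    by_cases hv : ω v = d
    · exact ih hv h2
    · exact ⟨v, u, hadj.symm, hv, h1⟩

lemma exists_flood_list {n c : ℕ} (hn : 0 < n) :
    ∀ (k : ℕ) (ω : Fin n → Fin c) (d : Fin c),
      (Finset.univ.filter fun u : Fin n => ω u ≠ d).card ≤ k →
      (∃ u, ω u = d) →
      ∃ ms : List (Fin n × Fin c), ms.length ≤ k ∧ ∀ u, floodSeq (pathGraph n) ms ω u = d := by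
  intro k
  induction k with
  | zero =>
    intro ω d hcard hex
    refine ⟨[], by simp, ?_⟩
    intro u
    by_contra hu
    have : u ∈ Finset.univ.filter fun u : Fin n => ω u ≠ d := by
      simp only [Finset.mem_filter, Finset.mem_univ, true_and]
      simpa [floodSeq] using hu
    have := Finset.card_pos.mpr ⟨u, this⟩
    simp only [floodSeq] at hu
    have : (Finset.univ.filter fun u : Fin n => ω u ≠ d).card ≠ 0 :=
      Nat.pos_iff_ne_zero.mp (Finset.card_pos.mpr ⟨u, by
        simp only [Finset.mem_filter, Finset.mem_univ, true_and]; exact hu⟩)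
    omega
  | succ k ih =>
    intro ω d hcard hex
    by_cases hall : ∀ u, ω u = d
    · exact ⟨[], by simp, fun u => by simpa [floodSeq] using hall u⟩
    · push_neg at hall
      obtain ⟨b, hb⟩ := hall
      obtain ⟨a, ha⟩ := hex
      have hreach : (pathGraph n).Reachable a b := pathGraph_preconnected n a b
      obtain ⟨p⟩ := hreach
      obtain ⟨x, y, hxy, hx, hy⟩ := boundary_of_walk p ha hb
      -- play the move (x, d)
      set ω' := floodMove (pathGraph n) ω x d with hω'
      have hx' : ω' x = d := by
        rw [hω']
        simp only [floodMove]
        rw [if_pos (Reachable.refl x)]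
      have hsub : (Finset.univ.filter fun u : Fin n => ω' u ≠ d) ⊂
          (Finset.univ.filter fun u : Fin n => ω u ≠ d) := by
        constructor
        · intro u hu
          simp only [Finset.mem_filter, Finset.mem_univ, true_and] at hu ⊢
          intro hud
          apply hu
          rw [hω']
          simp only [floodMove]
          by_cases hr : (monoSubgraph (pathGraph n) ω).Reachable x u
          · rw [if_pos hr]
          · rw [if_neg hr]; exact hud
        · intro hcon
          have hxmem : x ∈ Finset.univ.filter fun u : Fin n => ω u ≠ d := by
            simp only [Finset.mem_filter, Finset.mem_univ, true_and]; exact hx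
          have := hcon hxmem
          simp only [Finset.mem_filter, Finset.mem_univ, true_and] at this
          exact this hx'
      have hcard' : (Finset.univ.filter fun u : Fin n => ω' u ≠ d).card ≤ k := by
        have := Finset.card_lt_card hsub
        omega
      have hex' : ∃ u, ω' u = d := ⟨x, hx'⟩
      obtain ⟨ms, hlen, hms⟩ := ih ω' d hcard' hex'
      exact ⟨(x, d) :: ms, by simp [List.length_cons]; omega, fun u => hms u⟩

lemma pigeonhole_colour {n c : ℕ} (hc : 0 < c) (hcn : c ≤ n) (ω : Fin n → Fin c) :
    ∃ d : Fin c, (n + c - 1) / c ≤ (Finset.univ.filter fun u : Fin n => ω u = d).card := by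
  by_contra hcon
  push_neg at hcon
  have hsum : (Finset.univ : Finset (Fin n)).card =
      ∑ d : Fin c, (Finset.univ.filter fun u : Fin n => ω u = d).card :=
    Finset.card_eq_sum_card_fiberwise (fun x _ => Finset.mem_univ (ω x))
  have hN : (n + c - 1) / c = (n - 1) / c + 1 := by
    have : n + c - 1 = (n - 1) + c := by omega
    rw [this, Nat.add_div_right _ hc]
  have hle : ∀ d : Fin c, (Finset.univ.filter fun u : Fin n => ω u = d).card ≤ (n - 1) / c := by
    intro d
    have := hcon d
    omega
  have hsum2 : ∑ d : Fin c, (Finset.univ.filter fun u : Fin n => ω u = d).card ≤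
      ∑ _d : Fin c, (n - 1) / c := Finset.sum_le_sum (fun d _ => hle d)
  have hconst : ∑ _d : Fin c, (n - 1) / c = c * ((n - 1) / c) := by
    rw [Finset.sum_const, Finset.card_univ, Fintype.card_fin, smul_eq_mul]
  have hmd : c * ((n - 1) / c) ≤ n - 1 := Nat.mul_div_le _ _
  have hcardn : (Finset.univ : Finset (Fin n)).card = n := by simp
  omega

lemma floodCostMin_upper {n c : ℕ} (hc : 0 < c) (hcn : c ≤ n) (ω : Fin n → Fin c) :
    floodCostMin (pathGraph n) ω ≤ n - (n + c - 1) / c := by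
  obtain ⟨d, hd⟩ := pigeonhole_colour hc hcn ω
  have hN1 : 1 ≤ (n + c - 1) / c := by
    have : c ≤ n + c - 1 := by omega
    exact Nat.one_le_div_iff hc |>.mpr this
  have hex : ∃ u, ω u = d := by
    have hpos : 0 < (Finset.univ.filter fun u : Fin n => ω u = d).card := by omega
    obtain ⟨u, hu⟩ := Finset.card_pos.mp hpos
    simp only [Finset.mem_filter, Finset.mem_univ, true_and] at hu
    exact ⟨u, hu⟩
  have hcompl := Finset.card_filter_add_card_filter_not
    (s := (Finset.univ : Finset (Fin n))) (p := fun u => ω u = d)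
  have hcardn : (Finset.univ : Finset (Fin n)).card = n := by simp
  have hcard : (Finset.univ.filter fun u : Fin n => ¬ (ω u = d)).card ≤
      n - (n + c - 1) / c := by omega
  have hcard' : (Finset.univ.filter fun u : Fin n => ω u ≠ d).card ≤ n - (n + c - 1) / c := hcard
  obtain ⟨ms, hlen, hms⟩ := exists_flood_list (by omega : 0 < n) (n - (n + c - 1) / c) ω d
    hcard' hex
  have h1 : floodCost (pathGraph n) ω d ≤ ms.length :=
    Nat.sInf_le ⟨ms, rfl, hms⟩
  have h2 : floodCostMin (pathGraph n) ω ≤ floodCost (pathGraph n) ω d :=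
    Nat.sInf_le ⟨d, rfl⟩
  omega

theorem maxFloodCost_pathGraph' (n c : ℕ) (hc : 1 ≤ c) (hcn : c ≤ n) :
    sSup {k | ∃ ω : Fin n → Fin c, Function.Surjective ω ∧ floodCostMin (pathGraph n) ω = k} =
      n - (n + c - 1) / c := by
  have hc' : 0 < c := hc
  -- the cyclic colouring
  set ω₀ : Fin n → Fin c := fun u => ⟨u.val % c, Nat.mod_lt _ hc'⟩ with hω₀def
  have hω₀ : ∀ u : Fin n, (ω₀ u).val = u.val % c := fun u => rfl
  have hsurj : Function.Surjective ω₀ := by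
    intro d
    refine ⟨⟨d.val, lt_of_lt_of_le d.isLt hcn⟩, ?_⟩
    apply Fin.ext
    rw [hω₀]
    exact Nat.mod_eq_of_lt d.isLt
  -- lower bound for the cyclic colouring
  have hlow : n - (n + c - 1) / c ≤ floodCostMin (pathGraph n) ω₀ := by
    have hne : {k | ∃ d : Fin c, floodCost (pathGraph n) ω₀ d = k}.Nonempty :=
      ⟨floodCost (pathGraph n) ω₀ ⟨0, hc'⟩, ⟨0, hc'⟩, rfl⟩
    obtain ⟨d, hd⟩ := Nat.sInf_mem hne
    rw [floodCostMin, ← hd]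
    -- floodCost is the sInf of a nonempty set of lengths
    have hexd : ∃ u, ω₀ u = d := hsurj d
    have hTne : {k | ∃ ms : List (Fin n × Fin c), ms.length = k ∧
        ∀ v, floodSeq (pathGraph n) ms ω₀ v = d}.Nonempty := by
      obtain ⟨ms, _, hms⟩ := exists_flood_list (by omega : 0 < n) n ω₀ d
        (le_trans (Finset.card_le_card (Finset.filter_subset _ _)) (by simp)) hexd
      exact ⟨ms.length, ms, rfl, hms⟩
    obtain ⟨ms, hmslen, hms⟩ := Nat.sInf_mem hTne
    rw [floodCost, ← hmslen]
    exact cyclic_lower hc' hcn ω₀ hω₀ d ms hms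
  have hmem : floodCostMin (pathGraph n) ω₀ ∈
      {k | ∃ ω : Fin n → Fin c, Function.Surjective ω ∧ floodCostMin (pathGraph n) ω = k} :=
    ⟨ω₀, hsurj, rfl⟩
  have hub : ∀ k ∈ {k | ∃ ω : Fin n → Fin c, Function.Surjective ω ∧
      floodCostMin (pathGraph n) ω = k}, k ≤ n - (n + c - 1) / c := by
    rintro k ⟨ω, _, rfl⟩
    exact floodCostMin_upper hc' hcn ω
  have hbdd : BddAbove {k | ∃ ω : Fin n → Fin c, Function.Surjective ω ∧
      floodCostMin (pathGraph n) ω = k} := ⟨n - (n + c - 1) / c, hub⟩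
  apply le_antisymm
  · exact csSup_le ⟨_, hmem⟩ hub
  · exact le_trans hlow (le_csSup hbdd hmem)


/-- For the path `P` on `n` vertices, `M_c(P) = n - ⌈n / c⌉`. -/
theorem maxFloodCost_pathGraph (n c : ℕ) (hc : 1 ≤ c) (hcn : c ≤ n) :
    maxFloodCost c (SimpleGraph.pathGraph n) = n - (n + c - 1) / c := by
  unfold maxFloodCost
  exact maxFloodCost_pathGraph' n c hc hcn
end

section
/- Let P be a path on t vertices with colouring ω from colour-set C, where |C| = c, and let Q_1,…,Q_r be a collection of pairwise vertex-disjoint subpaths of P. Then m(P,ω) ≤ t − Σ_{i=1}^r (|Q_i| − 1) − ⌈(t − Σ_{i=1}^r (|Q_i| − 1))/c⌉ + Σ_{i=1}^r m(Q_i,ω|_{Q_i}), where m(Q_i,ω|_{Q_i}) is the minimum number of moves needed to flood the path Q_i with its restricted colouring. -/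
open Classical SimpleGraph

namespace FloodAux

variable {C : Type*}

/-- Extension of a colouring of `Fin n` to all of `ℕ`, with default `c0`. -/
noncomputable def Ex (c0 : C) {n : ℕ} (g : Fin n → C) : ℕ → C :=
  fun x => if h : x < n then g ⟨x, h⟩ else c0

lemma Ex_lt (c0 : C) {n : ℕ} (g : Fin n → C) {x : ℕ} (h : x < n) :
    Ex c0 g x = g ⟨x, h⟩ := dif_pos h

/-- `F` is constant along consecutive steps from `x` to `y`. -/
def cOn (F : ℕ → C) (x y : ℕ) : Prop := ∀ z, x ≤ z → z < y → F z = F (z + 1)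

lemma cOn_out {F : ℕ → C} {x y : ℕ} (h : cOn F x y) {u v : ℕ}
    (hxu : x ≤ u) (huv : u ≤ v) (hvy : v ≤ y) : F u = F v := by
  revert hvy
  induction v, huv using Nat.le_induction with
  | base => intro _; rfl
  | succ w hw ih =>
    intro hvy
    exact (ih (by omega)).trans (h w (by omega) (by omega))

/-- Reachability predicate on the line: constant between `p` and `x`. -/
def Rch (F : ℕ → C) (p x : ℕ) : Prop := cOn F (min p x) (max p x)

lemma rch_refl (F : ℕ → C) (p : ℕ) : Rch F p p := by
  intro z h1 h2; omega

lemma rch_symm {F : ℕ → C} {p x : ℕ} (h : Rch F p x) : Rch F x p := by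
  intro z h1 h2; exact h z (by omega) (by omega)

lemma rch_out {F : ℕ → C} {p x : ℕ} (h : Rch F p x) : F p = F x := by
  rcases le_total p x with hle | hle
  · exact cOn_out h (by omega) hle (by omega)
  · exact (cOn_out h (by omega) hle (by omega)).symm

lemma rch_trans3 {F : ℕ → C} {p x y : ℕ} (h1 : Rch F p x) (h2 : Rch F p y) :
    Rch F x y := by
  intro z hz1 hz2
  by_cases hc : min p x ≤ z ∧ z < max p x
  · exact h1 z hc.1 hc.2
  · exact h2 z (by omega) (by omega)

lemma rch_trans {F : ℕ → C} {p x y : ℕ} (h1 : Rch F p x) (h2 : Rch F x y) :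
    Rch F p y := rch_trans3 (rch_symm h1) h2

lemma rch_convex {F : ℕ → C} {p x y : ℕ} (h : Rch F p x)
    (h1 : min p x ≤ y) (h2 : y ≤ max p x) : Rch F p y := by
  intro z hz1 hz2; exact h z (by omega) (by omega)

lemma rch_step {F : ℕ → C} {p x : ℕ} (h : Rch F p x) (he : F x = F (x + 1)) :
    Rch F p (x + 1) := by
  intro z hz1 hz2
  by_cases hc : min p x ≤ z ∧ z < max p x
  · exact h z hc.1 hc.2
  · have hzx : z = x := by omega
    subst hzx; exact he

lemma rch_step_down {F : ℕ → C} {p x : ℕ} (h : Rch F p x) (hx : 0 < x)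
    (he : F (x - 1) = F x) : Rch F p (x - 1) := by
  intro z hz1 hz2
  by_cases hc : min p x ≤ z ∧ z < max p x
  · exact h z hc.1 hc.2
  · have hzx : z = x - 1 := by omega
    rw [hzx]
    have h1 : x - 1 + 1 = x := by omega
    rw [h1]; exact he

lemma rch_swallow {F : ℕ → C} {p x α β : ℕ} (hA : cOn F α β) (h : Rch F p x)
    (hx1 : α ≤ x) (hx2 : x ≤ β) {y : ℕ} (hy1 : α ≤ y) (hy2 : y ≤ β) :
    Rch F p y := by
  refine rch_trans h ?_
  intro z hz1 hz2; exact hA z (by omega) (by omega)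

lemma reach_to_rch {t : ℕ} (c0 : C) (ζ : Fin t → C) {u v : Fin t}
    (h : (monoSubgraph (pathGraph t) ζ).Reachable u v) :
    Rch (Ex c0 ζ) u.val v.val := by
  obtain ⟨w⟩ := h
  induction w with
  | nil => exact rch_refl _ _
  | @cons u b v hadj p ih =>
    obtain ⟨hpg, hcol⟩ := hadj
    rw [pathGraph_adj] at hpg
    intro z hz1 hz2
    by_cases hc : min b.val v.val ≤ z ∧ z < max b.val v.val
    · exact ih z hc.1 hc.2
    · have hz : (z = u.val ∧ z + 1 = b.val) ∨ (z = b.val ∧ z + 1 = u.val) := by omega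
      have hub : Ex c0 ζ u.val = Ex c0 ζ b.val := by
        rw [Ex_lt c0 ζ u.isLt, Ex_lt c0 ζ b.isLt]
        simpa using hcol
      rcases hz with ⟨h1, h2⟩ | ⟨h1, h2⟩
      · rw [h1]
        have hb : (u : ℕ) + 1 = b := by omega
        rw [hb]; exact hub
      · rw [h1]
        have hb : (b : ℕ) + 1 = u := by omega
        rw [hb]; exact hub.symm

lemma rch_to_reach {t : ℕ} (c0 : C) (ζ : Fin t → C) :
    ∀ (k : ℕ) (u v : Fin t), u.val + k = v.val →
      cOn (Ex c0 ζ) u.val v.val → (monoSubgraph (pathGraph t) ζ).Reachable u v := by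
  intro k
  induction k with
  | zero =>
    intro u v h _
    have : u = v := Fin.ext (by omega)
    subst this; exact Reachable.refl _
  | succ k ih =>
    intro u v h hc
    have hu1 : u.val + 1 < t := by have := v.isLt; omega
    have hadj : (monoSubgraph (pathGraph t) ζ).Adj u ⟨u.val + 1, hu1⟩ := by
      refine ⟨?_, ?_⟩
      · rw [pathGraph_adj]; left; rfl
      · have hstep := hc u.val (le_refl _) (by omega)
        rw [Ex_lt c0 ζ u.isLt, Ex_lt c0 ζ hu1] at hstep
        simpa using hstep
    exact hadj.reachable.trans
      (ih ⟨u.val + 1, hu1⟩ v (by simpa using (by omega : u.val + 1 + k = v.val))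
        (fun z h1 h2 => hc z (by simp at h1 ⊢; omega) h2))

lemma reach_iff {t : ℕ} (c0 : C) (ζ : Fin t → C) (v u : Fin t) :
    (monoSubgraph (pathGraph t) ζ).Reachable v u ↔ Rch (Ex c0 ζ) v.val u.val := by
  constructor
  · exact reach_to_rch c0 ζ
  · intro h
    rcases le_total v.val u.val with hle | hle
    · exact rch_to_reach c0 ζ (u.val - v.val) v u (by omega)
        (fun z h1 h2 => h z (by omega) (by omega))
    · exact (rch_to_reach c0 ζ (v.val - u.val) u v (by omega)
        (fun z h1 h2 => h z (by omega) (by omega))).symm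

lemma floodMove_eval {t : ℕ} (c0 : C) (ζ : Fin t → C) (v : Fin t) (d : C) (u : Fin t) :
    floodMove (pathGraph t) ζ v d u = if Rch (Ex c0 ζ) v.val u.val then d else ζ u := by
  by_cases h : Rch (Ex c0 ζ) v.val u.val
  · rw [if_pos h]
    unfold floodMove
    rw [if_pos ((reach_iff c0 ζ v u).mpr h)]
  · rw [if_neg h]
    unfold floodMove
    rw [if_neg (fun hr => h ((reach_iff c0 ζ v u).mp hr))]

lemma Ex_floodMove {t : ℕ} (c0 : C) (ζ : Fin t → C) (v : Fin t) (d : C) (x : ℕ) :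
    Ex c0 (floodMove (pathGraph t) ζ v d) x =
      if x < t ∧ Rch (Ex c0 ζ) v.val x then d else Ex c0 ζ x := by
  by_cases h : x < t
  · rw [Ex_lt c0 _ h, Ex_lt c0 ζ h, floodMove_eval c0]
    by_cases h2 : Rch (Ex c0 ζ) v.val x
    · rw [if_pos h2, if_pos ⟨h, h2⟩]
    · rw [if_neg h2, if_neg (by tauto)]
  · have h1 : Ex c0 (floodMove (pathGraph t) ζ v d) x = c0 := dif_neg h
    have h2 : Ex c0 ζ x = c0 := dif_neg h
    rw [h1, h2, if_neg (by tauto)]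


lemma floodSeq_append {V C : Type*} (G : SimpleGraph V) (l1 l2 : List (V × C)) (ω : V → C) :
    floodSeq G (l1 ++ l2) ω = floodSeq G l2 (floodSeq G l1 ω) := by
  induction l1 generalizing ω with
  | nil => rfl
  | cons m ms ih => simp only [List.cons_append, floodSeq]; exact ih _

lemma floodCost_le {V : Type*} (G : SimpleGraph V) (ω : V → C) (d : C)
    (ms : List (V × C)) (h : ∀ x, floodSeq G ms ω x = d) : floodCost G ω d ≤ ms.length :=
  Nat.sInf_le ⟨ms, rfl, h⟩

lemma floodCost_exists {V : Type*} {G : SimpleGraph V} {ω : V → C} {d : C}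
    (hne : ∃ ms : List (V × C), ∀ x, floodSeq G ms ω x = d) :
    ∃ ms : List (V × C), ms.length = floodCost G ω d ∧ ∀ x, floodSeq G ms ω x = d := by
  obtain ⟨ms0, h0⟩ := hne
  exact Nat.sInf_mem (⟨ms0.length, ms0, rfl, h0⟩ :
    Set.Nonempty {k | ∃ ms, List.length ms = k ∧ ∀ v, floodSeq G ms ω v = d})

lemma floodCostMin_le {V : Type*} (G : SimpleGraph V) (ω : V → C) (d : C) :
    floodCostMin G ω ≤ floodCost G ω d := Nat.sInf_le ⟨d, rfl⟩

lemma floodCostMin_exists {V : Type*} [Nonempty C] (G : SimpleGraph V) (ω : V → C) :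
    ∃ d, floodCost G ω d = floodCostMin G ω :=
  Nat.sInf_mem (⟨floodCost G ω (Classical.arbitrary C), Classical.arbitrary C, rfl⟩ :
    Set.Nonempty {k | ∃ d : C, floodCost G ω d = k})

/-- The set of "left ends of non-`d`-coloured blocks". -/
noncomputable def startsD {n : ℕ} (g : Fin n → C) (d : C) : Finset (Fin n) :=
  Finset.univ.filter (fun v => g v ≠ d ∧ ∀ u : Fin n, u.val + 1 = v.val → g u ≠ g v)

lemma exists_least_nonconst {n : ℕ} {g : Fin n → C} {d : C} {v1 : Fin n} (hv1 : g v1 ≠ d) :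
    ∃ v₀ : Fin n, g v₀ ≠ d ∧ (∀ u : Fin n, u.val < v₀.val → g u = d) := by
  classical
  set S : Finset (Fin n) := Finset.univ.filter (fun v => g v ≠ d) with hS
  have hne : S.Nonempty := ⟨v1, by simp [hS, hv1]⟩
  refine ⟨S.min' hne, ?_, ?_⟩
  · have := S.min'_mem hne
    simp [hS] at this; exact this
  · intro u hu
    by_contra hgu
    have hmem : u ∈ S := by simp [hS, hgu]
    have := S.min'_le u hmem
    simp only [Fin.le_def] at this
    omega

lemma startsD_after_move (c0 : C) {n : ℕ} (g : Fin n → C) (d : C) (v₀ : Fin n)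
    (h0 : g v₀ ≠ d) (hleast : ∀ u : Fin n, u.val < v₀.val → g u = d) :
    startsD (floodMove (pathGraph n) g v₀ d) d ⊆ (startsD g d).erase v₀ := by
  intro v hv
  simp only [startsD, Finset.mem_filter, Finset.mem_univ, true_and] at hv
  obtain ⟨hvne, hvstart⟩ := hv
  have hv_eval := floodMove_eval c0 g v₀ d v
  have hnr : ¬ Rch (Ex c0 g) v₀.val v.val := by
    intro hr; rw [hv_eval, if_pos hr] at hvne; exact hvne rfl
  have hgv : floodMove (pathGraph n) g v₀ d v = g v := by rw [hv_eval, if_neg hnr]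
  rw [Finset.mem_erase]
  refine ⟨?_, ?_⟩
  · intro heq; subst heq; exact hnr (rch_refl _ _)
  · simp only [startsD, Finset.mem_filter, Finset.mem_univ, true_and]
    refine ⟨by rw [hgv] at hvne; exact hvne, ?_⟩
    intro u hu1 hgu
    -- g u = g v, u + 1 = v: derive contradiction with hvstart
    have hrch : Rch (Ex c0 g) u.val v.val := by
      intro z hz1 hz2
      have hz : z = u.val := by omega
      subst hz
      rw [Ex_lt c0 g u.isLt, show (u:ℕ) + 1 = v.val from hu1, Ex_lt c0 g v.isLt]
      simpa using hgu
    have hnru : ¬ Rch (Ex c0 g) v₀.val u.val := fun hr => hnr (rch_trans hr hrch)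
    have hgu1 : floodMove (pathGraph n) g v₀ d u = g u := by
      rw [floodMove_eval c0, if_neg hnru]
    exact hvstart u hu1 (by rw [hgu1, hgv]; exact hgu)

lemma flood_to_target : ∀ (N n : ℕ) (g : Fin n → C) (d : C), (startsD g d).card ≤ N →
    ∃ ms : List (Fin n × C), ms.length ≤ N ∧ ∀ v, floodSeq (pathGraph n) ms g v = d := by
  intro N
  induction N with
  | zero =>
    intro n g d hc
    refine ⟨[], by simp, fun v => ?_⟩
    show g v = d
    by_contra hv
    obtain ⟨v₀, h0, hleast⟩ := exists_least_nonconst hv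
    have hmem : v₀ ∈ startsD g d := by
      simp only [startsD, Finset.mem_filter, Finset.mem_univ, true_and]
      exact ⟨h0, fun u hu hgu => h0 (by rw [← hgu]; exact (hleast u (by omega)) ▸ (hleast u (by omega)))⟩
    have : 0 < (startsD g d).card := Finset.card_pos.mpr ⟨v₀, hmem⟩
    omega
  | succ N ih =>
    intro n g d hc
    by_cases hall : ∀ v, g v = d
    · exact ⟨[], by simp, hall⟩
    · push_neg at hall
      obtain ⟨v1, hv1⟩ := hall
      obtain ⟨v₀, h0, hleast⟩ := exists_least_nonconst hv1
      have hmem : v₀ ∈ startsD g d := by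
        simp only [startsD, Finset.mem_filter, Finset.mem_univ, true_and]
        refine ⟨h0, fun u hu hgu => ?_⟩
        have := hleast u (by omega)
        rw [this] at hgu; exact h0 hgu.symm
      have hsub := startsD_after_move d g d v₀ h0 hleast
      have hcard : (startsD (floodMove (pathGraph n) g v₀ d) d).card ≤ N := by
        have h1 := Finset.card_le_card hsub
        have h2 := Finset.card_erase_of_mem hmem
        have h3 : 0 < (startsD g d).card := Finset.card_pos.mpr ⟨v₀, hmem⟩
        omega
      obtain ⟨ms', hl', hf'⟩ := ih n (floodMove (pathGraph n) g v₀ d) d hcard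
      exact ⟨(v₀, d) :: ms', by simpa using hl', hf'⟩

/-- Cost of flooding a path-board to a single (best) colour. -/
noncomputable def bcost {n : ℕ} (g : Fin n → C) : ℕ := floodCostMin (pathGraph n) g

lemma bcost_exists (c0 : C) {n : ℕ} (g : Fin n → C) :
    ∃ (d : C) (ms : List (Fin n × C)), ms.length = bcost g ∧
      ∀ v, floodSeq (pathGraph n) ms g v = d := by
  have : Nonempty C := ⟨c0⟩
  obtain ⟨d, hd⟩ := floodCostMin_exists (pathGraph n) g
  obtain ⟨ms, h1, h2⟩ := floodCost_exists (ω := g) (G := pathGraph n) (d := d)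
    (by obtain ⟨ms0, _, h⟩ := flood_to_target (startsD g d).card n g d le_rfl; exact ⟨ms0, h⟩)
  exact ⟨d, ms, by rw [h1, hd]; rfl, h2⟩

lemma bcost_le_of_seq {n : ℕ} {g : Fin n → C} {ms : List (Fin n × C)} {d : C}
    (h : ∀ v, floodSeq (pathGraph n) ms g v = d) : bcost g ≤ ms.length :=
  le_trans (floodCostMin_le _ _ d) (floodCost_le _ _ _ ms h)

lemma bcost_const {n : ℕ} {g : Fin n → C} {d : C} (h : ∀ v, g v = d) : bcost g = 0 :=
  Nat.le_zero.mp (bcost_le_of_seq (ms := []) h)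

lemma bcost_zero_const (c0 : C) {n : ℕ} {g : Fin n → C} (h : bcost g = 0) :
    ∃ d, ∀ v, g v = d := by
  obtain ⟨d, ms, hlen, hfl⟩ := bcost_exists c0 g
  rw [h] at hlen
  have hnil : ms = [] := List.length_eq_zero_iff.mp hlen
  subst hnil
  exact ⟨d, hfl⟩

/-- Sub-board of a path board. -/
def sub {n : ℕ} (g : Fin n → C) (s m : ℕ) (hsm : s + m ≤ n) : Fin m → C :=
  fun k => g ⟨s + k.val, by omega⟩

lemma Ex_sub (c0 : C) {n : ℕ} (g : Fin n → C) {s m : ℕ} (hsm : s + m ≤ n) {z : ℕ}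
    (hz : z < m) : Ex c0 (sub g s m hsm) z = Ex c0 g (s + z) := by
  rw [Ex_lt c0 _ hz, Ex_lt c0 g (by omega : s + z < n)]
  rfl

lemma rch_shift (c0 : C) {n : ℕ} (g : Fin n → C) {s m : ℕ} (hsm : s + m ≤ n) {α β : ℕ}
    (hα : α < m) (hβ : β < m) :
    Rch (Ex c0 (sub g s m hsm)) α β ↔ Rch (Ex c0 g) (s + α) (s + β) := by
  constructor
  · intro hr z hz1 hz2
    have hzb : min α β ≤ z - s ∧ z - s < max α β := by omega
    have h1 := hr (z - s) hzb.1 hzb.2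
    rw [Ex_sub c0 g hsm (by omega), Ex_sub c0 g hsm (by omega)] at h1
    have e1 : s + (z - s) = z := by omega
    have e2 : s + (z - s + 1) = z + 1 := by omega
    rw [e1, e2] at h1
    exact h1
  · intro hr z hz1 hz2
    have h1 := hr (s + z) (by omega) (by omega)
    rw [Ex_sub c0 g hsm (by omega), Ex_sub c0 g hsm (by omega : z + 1 < m)]
    have e : s + (z + 1) = s + z + 1 := by omega
    rw [e]
    exact h1

lemma restrict_floodMove (c0 : C) {n : ℕ} (g : Fin n → C) {s m : ℕ} (hsm : s + m ≤ n)
    (v : Fin n) (d : C) :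
    (sub (floodMove (pathGraph n) g v d) s m hsm = sub g s m hsm) ∨
    (∃ p : Fin m, sub (floodMove (pathGraph n) g v d) s m hsm
        = floodMove (pathGraph m) (sub g s m hsm) p d) := by
  by_cases hex : ∃ p : Fin m, Rch (Ex c0 g) v.val (s + p.val)
  · right
    obtain ⟨p, hp⟩ := hex
    refine ⟨p, funext fun k => ?_⟩
    show floodMove (pathGraph n) g v d ⟨s + k.val, by omega⟩ = _
    rw [floodMove_eval c0, floodMove_eval c0]
    have hiff : Rch (Ex c0 g) v.val (s + k.val) ↔
        Rch (Ex c0 (sub g s m hsm)) p.val k.val := by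
      rw [rch_shift c0 g hsm p.isLt k.isLt]
      exact ⟨fun h2 => rch_trans3 hp h2, fun h2 => rch_trans hp h2⟩
    by_cases h2 : Rch (Ex c0 g) v.val (s + k.val)
    · rw [if_pos h2, if_pos (hiff.mp h2)]
    · rw [if_neg h2, if_neg (fun hh => h2 (hiff.mpr hh))]
      rfl
  · left
    funext k
    show floodMove (pathGraph n) g v d ⟨s + k.val, by omega⟩ = _
    rw [floodMove_eval c0, if_neg (fun hh => hex ⟨k, hh⟩)]
    rfl

lemma restrict_floodSeq (c0 : C) {n : ℕ} {s m : ℕ} (hsm : s + m ≤ n) :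
    ∀ (ms : List (Fin n × C)) (g : Fin n → C), ∃ ms' : List (Fin m × C),
      ms'.length ≤ ms.length ∧
      sub (floodSeq (pathGraph n) ms g) s m hsm = floodSeq (pathGraph m) ms' (sub g s m hsm) := by
  intro ms
  induction ms with
  | nil => exact fun g => ⟨[], by simp, rfl⟩
  | cons mv ms ih =>
    intro g
    obtain ⟨ms', hl', heq'⟩ := ih (floodMove (pathGraph n) g mv.1 mv.2)
    rcases restrict_floodMove c0 g hsm mv.1 mv.2 with heq | ⟨p, heq⟩
    · exact ⟨ms', by simp; omega, by
        show sub (floodSeq (pathGraph n) ms _) s m hsm = _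
        rw [heq', heq]⟩
    · refine ⟨(p, mv.2) :: ms', by simpa using hl', ?_⟩
      show sub (floodSeq (pathGraph n) ms _) s m hsm
        = floodSeq (pathGraph m) ms' (floodMove (pathGraph m) (sub g s m hsm) p mv.2)
      rw [heq', heq]

lemma bcost_sub (c0 : C) {n : ℕ} (g : Fin n → C) {s m : ℕ} (hsm : s + m ≤ n) :
    bcost (sub g s m hsm) ≤ bcost g := by
  obtain ⟨d, ms, hlen, hfl⟩ := bcost_exists c0 g
  obtain ⟨ms', hl', heq⟩ := restrict_floodSeq c0 hsm ms g
  have hfin : ∀ v, floodSeq (pathGraph m) ms' (sub g s m hsm) v = d := by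
    intro v
    rw [← heq]
    exact hfl _
  calc bcost (sub g s m hsm) ≤ ms'.length := bcost_le_of_seq hfin
    _ ≤ ms.length := hl'
    _ = bcost g := hlen

lemma ceil_monotone {c x y : ℕ} (hc : 0 < c) (h : x ≤ y) :
    x - (x + c - 1) / c ≤ y - (y + c - 1) / c := by
  induction y, h using Nat.le_induction with
  | base => exact le_refl _
  | succ w hw ih =>
    have h1 : (w + 1 + c - 1) / c = (w + c) / c := by congr 1; omega
    have h2 : (w + c) / c = w / c + 1 := Nat.add_div_right w hc
    have h3 : w / c ≤ (w + c - 1) / c := Nat.div_le_div_right (by omega)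
    have key : w + 1 - (w + 1 + c - 1) / c = w - w / c := by
      rw [h1, h2, Nat.succ_sub_succ]
    rw [key]
    exact le_trans ih (Nat.sub_le_sub_left h3 w)

lemma ceil_le_of_le_mul {B m c : ℕ} (hc : 0 < c) (h : B ≤ c * m) : (B + c - 1) / c ≤ m := by
  have h1 : (B + c - 1) / c ≤ (c * m + (c - 1)) / c := Nat.div_le_div_right (by omega)
  have h2 : (c * m + (c - 1)) / c = m + (c - 1) / c := Nat.mul_add_div hc m (c - 1)
  have h3 : (c - 1) / c = 0 := Nat.div_eq_of_lt (by omega)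
  omega

/-- The set of left ends of blocks. -/
noncomputable def starts {n : ℕ} (g : Fin n → C) : Finset (Fin n) :=
  Finset.univ.filter (fun v => ∀ u : Fin n, u.val + 1 = v.val → g u ≠ g v)

lemma startsD_card {n : ℕ} (g : Fin n → C) (d : C) :
    (startsD g d).card
      = (starts g).card - ((starts g).filter (fun v => g v = d)).card := by
  have heq : startsD g d = (starts g).filter (fun v => ¬ (g v = d)) := by
    ext v
    simp only [startsD, starts, Finset.mem_filter, Finset.mem_univ, true_and]
    tauto
  have hsplit := Finset.card_filter_add_card_filter_not
    (s := starts g) (p := fun v => g v = d)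
  rw [heq]
  omega

lemma pigeon {n : ℕ} [Fintype C] (g : Fin n → C) (hC : 0 < Fintype.card C) :
    ∃ d : C, (starts g).card
      ≤ Fintype.card C * ((starts g).filter (fun v => g v = d)).card := by
  by_contra hcon
  push_neg at hcon
  have hsum : (starts g).card = ∑ d : C, ((starts g).filter (fun v => g v = d)).card :=
    Finset.card_eq_sum_card_fiberwise (fun x _ => Finset.mem_univ (g x))
  have hlt : ∑ d : C, Fintype.card C * ((starts g).filter (fun v => g v = d)).card
      < ∑ _d : C, (starts g).card :=
    Finset.sum_lt_sum_of_nonempty (by have : Nonempty C := Fintype.card_pos_iff.mp hC; exact Finset.univ_nonempty)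
      (fun d _ => hcon d)
  rw [← Finset.mul_sum, ← hsum, Finset.sum_const, Finset.card_univ, smul_eq_mul] at hlt
  exact absurd hlt (lt_irrefl _)

lemma card_interval {n : ℕ} (A L : ℕ) (h : A + L ≤ n) :
    (Finset.univ.filter (fun v : Fin n => A ≤ v.val ∧ v.val < A + L)).card = L := by
  rw [← Finset.card_range L]
  apply Finset.card_bij' (fun v _ => v.val - A)
    (fun k hk => (⟨A + k, by simp only [Finset.mem_range] at hk; omega⟩ : Fin n))
  case hi =>
    intro v hv
    simp only [Finset.mem_filter, Finset.mem_univ, true_and, Finset.card_range] at hv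
    simp only [Finset.mem_range, Finset.card_range]
    omega
  case hj =>
    intro k hk
    simp only [Finset.mem_range] at hk
    simp only [Finset.mem_filter, Finset.mem_univ, true_and]
    rw [Finset.card_range]
    exact ⟨by omega, by omega⟩
  case left_inv =>
    intro v hv
    simp only [Finset.mem_filter, Finset.mem_univ, true_and, Finset.card_range] at hv
    apply Fin.ext
    show A + (v.val - A) = v.val
    omega
  case right_inv =>
    intro k hk
    simp only [Finset.mem_range] at hk
    show A + k - A = k
    omega

lemma starts_count {t r : ℕ} (ζ : Fin t → C) (a L : Fin r → ℕ)
    (hL : ∀ i, 1 ≤ L i) (hend : ∀ i, a i + L i ≤ t)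
    (hdisj : ∀ i j, i ≠ j → a i + L i ≤ a j ∨ a j + L j ≤ a i)
    (hgood : ∀ i, ∃ w', w' ≤ L i ∧ (∀ v : Fin t, v ∈ starts ζ →
      a i ≤ v.val → v.val < a i + L i → v.val = a i + w')) :
    (starts ζ).card + (∑ i, (L i - 1)) ≤ t := by
  classical
  set Qf : Fin r → Finset (Fin t) :=
    fun i => Finset.univ.filter (fun v : Fin t => a i ≤ v.val ∧ v.val < a i + L i) with hQf
  set SG : Fin r → Finset (Fin t) := fun i => Qf i \ starts ζ with hSG
  have hQcard : ∀ i, (Qf i).card = L i := fun i => card_interval (a i) (L i) (hend i)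
  have hInter : ∀ i, (Qf i ∩ starts ζ).card ≤ 1 := by
    intro i
    obtain ⟨w', hw', huniq⟩ := hgood i
    apply Finset.card_le_one.mpr
    intro x hx y hy
    simp only [Finset.mem_inter, hQf, Finset.mem_filter, Finset.mem_univ, true_and] at hx hy
    apply Fin.ext
    rw [huniq x hx.2 hx.1.1 hx.1.2, huniq y hy.2 hy.1.1 hy.1.2]
  have hSGcard : ∀ i, L i - 1 ≤ (SG i).card := by
    intro i
    have h1 := Finset.card_inter_add_card_sdiff (Qf i) (starts ζ)
    have h2 := hInter i
    have h3 := hQcard i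
    simp only [hSG]
    omega
  have hdisjSG : ∀ i ∈ (Finset.univ : Finset (Fin r)), ∀ j ∈ Finset.univ, i ≠ j →
      Disjoint (SG i) (SG j) := by
    intro i _ j _ hij
    rw [Finset.disjoint_left]
    intro v hv hv2
    simp only [hSG, Finset.mem_sdiff, hQf, Finset.mem_filter, Finset.mem_univ, true_and] at hv hv2
    rcases hdisj i j hij with h | h <;> omega
  have hbiU : (Finset.univ.biUnion SG).card = ∑ i, (SG i).card :=
    Finset.card_biUnion hdisjSG
  have hdisjS : Disjoint (starts ζ) (Finset.univ.biUnion SG) := by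
    rw [Finset.disjoint_right]
    intro v hv
    simp only [Finset.mem_biUnion] at hv
    obtain ⟨i, _, hvi⟩ := hv
    simp only [hSG, Finset.mem_sdiff] at hvi
    exact hvi.2
  have hunion : (starts ζ ∪ Finset.univ.biUnion SG).card
      = (starts ζ).card + (Finset.univ.biUnion SG).card :=
    Finset.card_union_of_disjoint hdisjS
  have hle : (starts ζ ∪ Finset.univ.biUnion SG).card ≤ t := by
    have := Finset.card_le_univ (starts ζ ∪ Finset.univ.biUnion SG)
    simpa using this
  have hsum : (∑ i, (L i - 1)) ≤ ∑ i, (SG i).card :=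
    Finset.sum_le_sum (fun i _ => hSGcard i)
  omega

/-- Board given by a window `[s, s+m)` of the extended colouring. -/
noncomputable def bd (c0 : C) {t : ℕ} (ζ : Fin t → C) (s m : ℕ) : Fin m → C :=
  fun k => Ex c0 ζ (s + k.val)

lemma bd_eq_sub (c0 : C) {t : ℕ} (ζ : Fin t → C) {s m : ℕ} (hsm : s + m ≤ t) :
    bd c0 ζ s m = sub ζ s m hsm := by
  funext k
  show Ex c0 ζ (s + k.val) = _
  rw [Ex_lt c0 ζ (show s + k.val < t by have := k.isLt; omega)]
  rfl

lemma bd_sub_bd (c0 : C) {t : ℕ} (ζ : Fin t → C) {s m s' m' : ℕ}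
    (h1 : s ≤ s') (h2 : s' + m' ≤ s + m) :
    bcost (bd c0 ζ s' m') ≤ bcost (bd c0 ζ s m) := by
  have heq : bd c0 ζ s' m' = sub (bd c0 ζ s m) (s' - s) m' (by omega) := by
    funext k
    show Ex c0 ζ (s' + k.val) = Ex c0 ζ (s + ((s' - s) + k.val))
    congr 1
    omega
  rw [heq]
  exact bcost_sub c0 _ _

lemma bd_floodMove (c0 : C) {t : ℕ} (ζ : Fin t → C) {s m : ℕ} (hsm : s + m ≤ t)
    (p : Fin m) (d : C) :
    bd c0 (floodMove (pathGraph t) ζ ⟨s + p.val, by have := p.isLt; omega⟩ d) s m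
      = floodMove (pathGraph m) (bd c0 ζ s m) p d := by
  funext k
  show Ex c0 (floodMove (pathGraph t) ζ _ d) (s + k.val) = _
  rw [Ex_floodMove]
  rw [floodMove_eval c0 (bd c0 ζ s m) p d k]
  have hiff : (s + k.val < t ∧
      Rch (Ex c0 ζ) ((⟨s + p.val, by have := p.isLt; omega⟩ : Fin t)).val (s + k.val)) ↔
      Rch (Ex c0 (bd c0 ζ s m)) p.val k.val := by
    rw [bd_eq_sub c0 ζ hsm, rch_shift c0 ζ hsm p.isLt k.isLt]
    constructor
    · exact fun h => h.2
    · intro h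
      exact ⟨by have := k.isLt; omega, h⟩
  by_cases h2 : Rch (Ex c0 (bd c0 ζ s m)) p.val k.val
  · rw [if_pos (hiff.mpr h2), if_pos h2]
  · rw [if_neg (fun hh => h2 (hiff.mp hh)), if_neg h2]
    show Ex c0 ζ (s + k.val) = _
    rfl

lemma cOn_floodMove (c0 : C) {t : ℕ} (ζ : Fin t → C) (v : Fin t) (d : C) {α β : ℕ}
    (hβ : β < t) (h : cOn (Ex c0 ζ) α β) :
    cOn (Ex c0 (floodMove (pathGraph t) ζ v d)) α β := by
  by_cases hex : ∃ y, α ≤ y ∧ y ≤ β ∧ Rch (Ex c0 ζ) v.val y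
  · obtain ⟨y, hy1, hy2, hy3⟩ := hex
    intro z hz1 hz2
    have r1 : Rch (Ex c0 ζ) v.val z := rch_swallow h hy3 hy1 hy2 (by omega) (by omega)
    have r2 : Rch (Ex c0 ζ) v.val (z + 1) := rch_swallow h hy3 hy1 hy2 (by omega) (by omega)
    rw [Ex_floodMove, Ex_floodMove, if_pos ⟨by omega, r1⟩, if_pos ⟨by omega, r2⟩]
  · intro z hz1 hz2
    rw [Ex_floodMove, Ex_floodMove,
      if_neg (fun hh => hex ⟨z, by omega, by omega, hh.2⟩),
      if_neg (fun hh => hex ⟨z + 1, by omega, by omega, hh.2⟩)]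
    exact h z hz1 hz2

lemma bd_zero_cOn (c0 : C) {t : ℕ} (ζ : Fin t → C) {s m : ℕ} (hsm : s + m ≤ t)
    (h : bcost (bd c0 ζ s m) = 0) : cOn (Ex c0 ζ) s (s + m - 1) := by
  obtain ⟨d, hd⟩ := bcost_zero_const c0 h
  intro z hz1 hz2
  have k1 : z - s < m := by omega
  have k2 : z + 1 - s < m := by omega
  have e1 : Ex c0 ζ z = bd c0 ζ s m ⟨z - s, k1⟩ := by
    show _ = Ex c0 ζ (s + (z - s))
    congr 1
    omega
  have e2 : Ex c0 ζ (z + 1) = bd c0 ζ s m ⟨z + 1 - s, k2⟩ := by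
    show _ = Ex c0 ζ (s + (z + 1 - s))
    congr 1
    omega
  rw [e1, e2, hd, hd]

lemma phase1 {t r : ℕ} (c0 : C) (a L : Fin r → ℕ)
    (hL : ∀ i, 1 ≤ L i) (hend : ∀ i, a i + L i ≤ t)
    (hdisj : ∀ i j, i ≠ j → a i + L i ≤ a j ∨ a j + L j ≤ a i) :
    ∀ (N : ℕ) (ζ : Fin t → C) (w : Fin r → ℕ),
      (∀ i, w i ≤ L i) →
      (∀ i, w i ≠ 0 → 1 ≤ a i ∧ cOn (Ex c0 ζ) (a i - 1) (a i + w i - 1)) →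
      (∑ i, bcost (bd c0 ζ (a i + w i) (L i - w i))) ≤ N →
      ∃ ms : List (Fin t × C), ms.length ≤ N ∧
        ∀ i, ∃ w', w' ≤ L i ∧
          (w' ≠ 0 → 1 ≤ a i ∧
            cOn (Ex c0 (floodSeq (pathGraph t) ms ζ)) (a i - 1) (a i + w' - 1)) ∧
          cOn (Ex c0 (floodSeq (pathGraph t) ms ζ)) (a i + w') (a i + L i - 1) := by
  intro N
  induction N with
  | zero =>
    intro ζ w hw hcross hsum
    refine ⟨[], le_refl _, fun i => ⟨w i, hw i, hcross i, ?_⟩⟩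
    have hz : bcost (bd c0 ζ (a i + w i) (L i - w i)) = 0 :=
      Finset.sum_eq_zero_iff.mp (Nat.le_zero.mp hsum) i (Finset.mem_univ i)
    have hsm : (a i + w i) + (L i - w i) ≤ t := by have := hend i; have := hw i; omega
    have := bd_zero_cOn c0 ζ hsm hz
    have e : a i + w i + (L i - w i) - 1 = a i + L i - 1 := by have := hw i; omega
    rwa [e] at this
  | succ N ih =>
    intro ζ w hw hcross hsum
    by_cases hzero : (∑ i, bcost (bd c0 ζ (a i + w i) (L i - w i))) = 0
    · refine ⟨[], by simp, fun i => ⟨w i, hw i, hcross i, ?_⟩⟩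
      have hz : bcost (bd c0 ζ (a i + w i) (L i - w i)) = 0 :=
        Finset.sum_eq_zero_iff.mp hzero i (Finset.mem_univ i)
      have hsm : (a i + w i) + (L i - w i) ≤ t := by have := hend i; have := hw i; omega
      have := bd_zero_cOn c0 ζ hsm hz
      have e : a i + w i + (L i - w i) - 1 = a i + L i - 1 := by have := hw i; omega
      rwa [e] at this
    · -- pick the leftmost window with positive residual cost
      obtain ⟨i1, _, hi1⟩ := Finset.exists_ne_zero_of_sum_ne_zero hzero
      have hSne : (Finset.univ.filter
          (fun i => bcost (bd c0 ζ (a i + w i) (L i - w i)) ≠ 0)).Nonempty :=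
        ⟨i1, by simp [hi1]⟩
      have hSeImg := hSne.image a
      obtain ⟨istar, histar, haeq⟩ := Finset.mem_image.mp
        (((Finset.univ.filter
          (fun i => bcost (bd c0 ζ (a i + w i) (L i - w i)) ≠ 0)).image a).min'_mem hSeImg)
      have hmin : ∀ j, bcost (bd c0 ζ (a j + w j) (L j - w j)) ≠ 0 → a istar ≤ a j := by
        intro j hj
        rw [haeq]
        exact Finset.min'_le _ _ (Finset.mem_image_of_mem a (by simp [hj]))
      have hμpos : bcost (bd c0 ζ (a istar + w istar) (L istar - w istar)) ≠ 0 := by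
        simp at histar
        exact histar
      obtain ⟨dhat, ms0, hlen0, hfl0⟩ :=
        bcost_exists c0 (bd c0 ζ (a istar + w istar) (L istar - w istar))
      have hsm : (a istar + w istar) + (L istar - w istar) ≤ t := by
        have := hend istar; have := hw istar; omega
      cases ms0 with
      | nil => exact absurd hlen0.symm (by simpa using hμpos)
      | cons mv rest =>
        have hfl1 : ∀ v, floodSeq (pathGraph (L istar - w istar)) rest
            (floodMove (pathGraph (L istar - w istar))
              (bd c0 ζ (a istar + w istar) (L istar - w istar)) mv.1 mv.2) v = dhat := by
          intro v
          have := hfl0 v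
          simpa [floodSeq] using this
        have hnext : bcost (floodMove (pathGraph (L istar - w istar))
            (bd c0 ζ (a istar + w istar) (L istar - w istar)) mv.1 mv.2)
            ≤ bcost (bd c0 ζ (a istar + w istar) (L istar - w istar)) - 1 := by
          have h1 := bcost_le_of_seq hfl1
          have h2 : rest.length + 1
              = bcost (bd c0 ζ (a istar + w istar) (L istar - w istar)) := by
            simpa using hlen0
          omega
        have hPlt : (a istar + w istar) + mv.1.val < t := by have := mv.1.isLt; omega
        set P : Fin t := ⟨(a istar + w istar) + mv.1.val, hPlt⟩ with hP
        set ζ₁ : Fin t → C := floodMove (pathGraph t) ζ P mv.2 with hζ₁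
        have hbd1 : bd c0 ζ₁ (a istar + w istar) (L istar - w istar)
            = floodMove (pathGraph (L istar - w istar))
              (bd c0 ζ (a istar + w istar) (L istar - w istar)) mv.1 mv.2 :=
          bd_floodMove c0 ζ hsm mv.1 mv.2
        have hstep : ∀ j, ∃ w', w' ≤ L j ∧ w j ≤ w' ∧
            (w' ≠ 0 → 1 ≤ a j ∧ cOn (Ex c0 ζ₁) (a j - 1) (a j + w' - 1)) ∧
            bcost (bd c0 ζ₁ (a j + w') (L j - w')) + (if j = istar then 1 else 0)
              ≤ bcost (bd c0 ζ (a j + w j) (L j - w j)) := by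
          intro j
          by_cases hji : j = istar
          · subst hji
            refine ⟨w j, hw j, le_refl _, ?_, ?_⟩
            · intro hwne
              obtain ⟨h1, h2⟩ := hcross j hwne
              exact ⟨h1, cOn_floodMove c0 ζ P mv.2 (by have := hend j; have := hL j; have := hw j; omega) h2⟩
            · rw [if_pos rfl, hbd1]
              omega
          · rcases hdisj istar j (fun hh => hji hh.symm) with hright | hleft
            · -- j is to the right of istar : P.val < a j
              have hPlt2 : P.val < a j := by
                have := mv.1.isLt
                simp only [hP]
                omega
              by_cases hex : ∃ x, a j ≤ x ∧ x < a j + L j ∧ Rch (Ex c0 ζ) P.val x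
              · obtain ⟨x0, hx1, hx2, hx3⟩ := hex
                have hZne : ((Finset.range (a j + L j)).filter
                    (fun x => Rch (Ex c0 ζ) P.val x)).Nonempty :=
                  ⟨x0, by simp [hx2, hx3]⟩
                set z : ℕ := ((Finset.range (a j + L j)).filter
                    (fun x => Rch (Ex c0 ζ) P.val x)).max' hZne with hz
                have hzmem := ((Finset.range (a j + L j)).filter
                    (fun x => Rch (Ex c0 ζ) P.val x)).max'_mem hZne
                have hzR : Rch (Ex c0 ζ) P.val z := by
                  simp only [Finset.mem_filter, Finset.mem_range] at hzmem
                  exact hzmem.2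
                have hzlt : z < a j + L j := by
                  simp only [Finset.mem_filter, Finset.mem_range] at hzmem
                  exact hzmem.1
                have hzge : x0 ≤ z := Finset.le_max' _ x0 (by simp [hx2, hx3])
                have hzmax : ∀ y, Rch (Ex c0 ζ) P.val y → y < a j + L j → y ≤ z := by
                  intro y hy1 hy2
                  exact Finset.le_max' _ y (by simp [hy1, hy2])
                have hconv : ∀ y, P.val ≤ y → y ≤ z → Rch (Ex c0 ζ) P.val y := by
                  intro y hy1 hy2
                  exact rch_convex hzR (by omega) (by omega)
                have hwle : w j ≤ z + 1 - a j := by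
                  rcases Nat.eq_zero_or_pos (w j) with h0 | h0
                  · omega
                  · obtain ⟨hA1, hcr⟩ := hcross j (by omega)
                    have hin : Rch (Ex c0 ζ) P.val (a j - 1) := hconv _ (by omega) (by omega)
                    have h5 : Rch (Ex c0 ζ) P.val (a j + w j - 1) :=
                      rch_swallow hcr hin (by omega) (by omega) (by omega) (by omega)
                    have := hzmax _ h5 (by have := hw j; omega)
                    omega
                refine ⟨z + 1 - a j, by omega, hwle, ?_, ?_⟩
                · intro _
                  refine ⟨by omega, ?_⟩
                  intro y hy1 hy2
                  have e1 : Ex c0 ζ₁ y = mv.2 := by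
                    rw [hζ₁, Ex_floodMove, if_pos ⟨by have := hend j; omega,
                      hconv y (by omega) (by omega)⟩]
                  have e2 : Ex c0 ζ₁ (y + 1) = mv.2 := by
                    rw [hζ₁, Ex_floodMove, if_pos ⟨by have := hend j; omega,
                      hconv (y + 1) (by omega) (by omega)⟩]
                  rw [e1, e2]
                · rw [if_neg hji]
                  have heqbd : bd c0 ζ₁ (a j + (z + 1 - a j)) (L j - (z + 1 - a j))
                      = bd c0 ζ (a j + (z + 1 - a j)) (L j - (z + 1 - a j)) := by
                    funext k
                    show Ex c0 ζ₁ _ = Ex c0 ζ _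
                    rw [hζ₁, Ex_floodMove, if_neg]
                    rintro ⟨-, hr⟩
                    have hk := k.isLt
                    have := hzmax _ hr (by omega)
                    omega
                  rw [heqbd]
                  have hmono := bd_sub_bd c0 ζ (s := a j + w j) (m := L j - w j)
                    (s' := a j + (z + 1 - a j)) (m' := L j - (z + 1 - a j))
                    (by omega) (by have := hw j; omega)
                  omega
              · refine ⟨w j, hw j, le_refl _, ?_, ?_⟩
                · intro hwne
                  obtain ⟨h1, h2⟩ := hcross j hwne
                  exact ⟨h1, cOn_floodMove c0 ζ P mv.2
                    (by have := hend j; have := hL j; have := hw j; omega) h2⟩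
                · rw [if_neg hji]
                  have heqbd : bd c0 ζ₁ (a j + w j) (L j - w j)
                      = bd c0 ζ (a j + w j) (L j - w j) := by
                    funext k
                    show Ex c0 ζ₁ _ = Ex c0 ζ _
                    rw [hζ₁, Ex_floodMove, if_neg]
                    rintro ⟨-, hr⟩
                    have hk := k.isLt
                    have := hw j
                    exact hex ⟨a j + w j + k.val, by omega, by omega, hr⟩
                  rw [heqbd]
                  omega
            · -- j is to the left of istar : its window is already constant
              have hjzero : bcost (bd c0 ζ (a j + w j) (L j - w j)) = 0 := by
                by_contra hne
                have := hmin j hne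
                have := hL j
                omega
              obtain ⟨d0, hd0⟩ := bcost_zero_const c0 hjzero
              have hsuf : cOn (Ex c0 ζ) (a j + w j) (a j + L j - 1) := by
                have hsm2 : (a j + w j) + (L j - w j) ≤ t := by
                  have := hend j; have := hw j; omega
                have := bd_zero_cOn c0 ζ hsm2 hjzero
                have e : a j + w j + (L j - w j) - 1 = a j + L j - 1 := by
                  have := hw j; omega
                rwa [e] at this
              refine ⟨w j, hw j, le_refl _, ?_, ?_⟩
              · intro hwne
                obtain ⟨h1, h2⟩ := hcross j hwne
                exact ⟨h1, cOn_floodMove c0 ζ P mv.2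
                  (by have := hend j; have := hL j; have := hw j; omega) h2⟩
              · rw [if_neg hji, hjzero]
                have hzero2 : bcost (bd c0 ζ₁ (a j + w j) (L j - w j)) = 0 := by
                  by_cases hex : ∃ y, a j + w j ≤ y ∧ y ≤ a j + L j - 1 ∧
                      Rch (Ex c0 ζ) P.val y
                  · obtain ⟨y, hy1, hy2, hy3⟩ := hex
                    apply bcost_const (d := mv.2)
                    intro k
                    show Ex c0 ζ₁ (a j + w j + k.val) = mv.2
                    have hk := k.isLt
                    have hrk : Rch (Ex c0 ζ) P.val (a j + w j + k.val) :=
                      rch_swallow hsuf hy3 hy1 hy2 (by omega) (by omega)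
                    rw [hζ₁, Ex_floodMove, if_pos ⟨by have := hend j; omega, hrk⟩]
                  · apply bcost_const (d := d0)
                    intro k
                    show Ex c0 ζ₁ (a j + w j + k.val) = d0
                    have hk := k.isLt
                    rw [hζ₁, Ex_floodMove, if_neg]
                    · exact hd0 k
                    · rintro ⟨-, hr⟩
                      exact hex ⟨a j + w j + k.val, by omega, by omega, hr⟩
                rw [hzero2]
        choose w' hw'1 hw'2 hw'3 hw'4 using hstep
        have hsumnew : (∑ j, bcost (bd c0 ζ₁ (a j + w' j) (L j - w' j))) ≤ N := by
          have h1 : (∑ j, (bcost (bd c0 ζ₁ (a j + w' j) (L j - w' j))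
              + (if j = istar then 1 else 0)))
              ≤ ∑ j, bcost (bd c0 ζ (a j + w j) (L j - w j)) :=
            Finset.sum_le_sum (fun j _ => hw'4 j)
          rw [Finset.sum_add_distrib] at h1
          have h2 : (∑ j, if j = istar then (1:ℕ) else 0) = 1 := by
            rw [Finset.sum_ite_eq' Finset.univ istar (fun _ => (1:ℕ))]
            simp
          omega
        obtain ⟨ms', hlen', hgood'⟩ := ih ζ₁ w' hw'1 hw'3 hsumnew
        exact ⟨(P, mv.2) :: ms', by simpa using hlen', hgood'⟩

lemma good_unique_start (c0 : C) {t : ℕ} (ζ : Fin t → C) {A Li w' : ℕ}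
    (hAL : A + Li ≤ t) (hw' : w' ≤ Li)
    (hcr : w' ≠ 0 → 1 ≤ A ∧ cOn (Ex c0 ζ) (A - 1) (A + w' - 1))
    (hsf : cOn (Ex c0 ζ) (A + w') (A + Li - 1)) :
    ∀ v : Fin t, v ∈ starts ζ → A ≤ v.val → v.val < A + Li → v.val = A + w' := by
  intro v hv h1 h2
  simp only [starts, Finset.mem_filter, Finset.mem_univ, true_and] at hv
  by_contra hne
  have hvpos : ¬ (1 ≤ v.val ∧ Ex c0 ζ (v.val - 1) = Ex c0 ζ v.val) := by
    rintro ⟨hp, he⟩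
    have hu : v.val - 1 < t := by have := v.isLt; omega
    apply hv ⟨v.val - 1, hu⟩ (show v.val - 1 + 1 = v.val by omega)
    have e1 : Ex c0 ζ (v.val - 1) = ζ ⟨v.val - 1, hu⟩ := Ex_lt c0 ζ hu
    have e2 : Ex c0 ζ v.val = ζ v := by
      rw [Ex_lt c0 ζ v.isLt]
    rw [← e1, ← e2, he]
  rcases Nat.lt_or_ge v.val (A + w') with hlt | hge
  · have hw0 : w' ≠ 0 := by omega
    obtain ⟨hA1, hcr2⟩ := hcr hw0
    refine hvpos ⟨by omega, ?_⟩
    have hstep := hcr2 (v.val - 1) (by omega) (by omega)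
    have e : v.val - 1 + 1 = v.val := by omega
    rwa [e] at hstep
  · refine hvpos ⟨by omega, ?_⟩
    have hstep := hsf (v.val - 1) (by omega) (by omega)
    have e : v.val - 1 + 1 = v.val := by omega
    rwa [e] at hstep

end FloodAux

/-- Let `P` be a path on `t` vertices with colouring `ω` from a colour-set `C` with
`|C| = c`, and let `Q_1, …, Q_r` be pairwise vertex-disjoint subpaths of `P` (the subpath
`Q_i` consisting of the `L i ≥ 1` consecutive vertices starting at vertex `a i`). Then
`m(P, ω) ≤ t - Σᵢ(|Q_i| - 1) - ⌈(t - Σᵢ(|Q_i| - 1)) / c⌉ + Σᵢ m(Q_i, ω|_{Q_i})`. -/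
theorem path_disjoint_subpaths_bound {C : Type*} [Fintype C] (t c : ℕ)
    (hC : Fintype.card C = c) (ω : Fin t → C) (r : ℕ) (a L : Fin r → ℕ)
    (hL : ∀ i, 1 ≤ L i) (hend : ∀ i, a i + L i ≤ t)
    (hdisj : ∀ i j, i ≠ j → a i + L i ≤ a j ∨ a j + L j ≤ a i) :
    floodCostMin (SimpleGraph.pathGraph t) ω ≤
      t - (∑ i, (L i - 1)) - (t - (∑ i, (L i - 1)) + c - 1) / c +
        ∑ i, floodCostMin (SimpleGraph.pathGraph (L i))
          (fun k => ω ⟨a i + (k : ℕ), by have h1 := k.isLt; have h2 := hend i; omega⟩) := by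
  classical
  rcases Nat.eq_zero_or_pos t with ht0 | ht
  · subst ht0
    have hzero : floodCostMin (SimpleGraph.pathGraph 0) ω = 0 := by
      by_cases hCne : Nonempty C
      · obtain ⟨d⟩ := hCne
        have h0 : floodCost (SimpleGraph.pathGraph 0) ω d ≤ 0 :=
          FloodAux.floodCost_le _ _ _ [] (fun v => v.elim0)
        have := le_trans (FloodAux.floodCostMin_le (SimpleGraph.pathGraph 0) ω d) h0
        omega
      · have hie : IsEmpty C := not_nonempty_iff.mp hCne
        have he : {k | ∃ d : C, floodCost (SimpleGraph.pathGraph 0) ω d = k} = ∅ := by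
          ext k
          simp only [Set.mem_setOf_eq, Set.mem_empty_iff_false, iff_false]
          rintro ⟨d, -⟩
          exact hie.false d
        show sInf _ = 0
        rw [he]
        exact Nat.sInf_empty
    rw [hzero]
    exact Nat.zero_le _
  · set c0 : C := ω ⟨0, ht⟩ with hc0
    have hCne : Nonempty C := ⟨c0⟩
    have hcpos : 0 < c := by rw [← hC]; exact Fintype.card_pos
    have hsum0 : (∑ i, FloodAux.bcost (FloodAux.bd c0 ω (a i + (fun _ : Fin r => 0) i)
        (L i - (fun _ : Fin r => 0) i)))
        ≤ ∑ i, floodCostMin (SimpleGraph.pathGraph (L i))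
          (fun k => ω ⟨a i + (k : ℕ), by have h1 := k.isLt; have h2 := hend i; omega⟩) := by
      apply le_of_eq
      apply Finset.sum_congr rfl
      intro i _
      show floodCostMin (SimpleGraph.pathGraph (L i))
        (FloodAux.bd c0 ω (a i + 0) (L i - 0)) = _
      apply congrArg
      funext k
      show FloodAux.Ex c0 ω (a i + 0 + k.val) = _
      rw [FloodAux.Ex_lt c0 ω
        (show a i + 0 + (k : ℕ) < t by have := k.isLt; have := hend i; omega)]
      exact congrArg ω (Fin.ext (show a i + 0 + (k : ℕ) = a i + (k : ℕ) by omega))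
    obtain ⟨ms1, hlen1, hgood1⟩ := FloodAux.phase1 c0 a L hL hend hdisj _
      ω (fun _ => 0) (fun i => Nat.zero_le _) (fun i h0 => absurd rfl h0) hsum0
    set ζ' : Fin t → C := floodSeq (SimpleGraph.pathGraph t) ms1 ω with hζ'
    have hgood2 : ∀ i, ∃ w', w' ≤ L i ∧ (∀ v : Fin t, v ∈ FloodAux.starts ζ' →
        a i ≤ v.val → v.val < a i + L i → v.val = a i + w') := by
      intro i
      obtain ⟨w', h1, h2, h3⟩ := hgood1 i
      exact ⟨w', h1, FloodAux.good_unique_start c0 ζ' (hend i) h1 h2 h3⟩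
    have hB := FloodAux.starts_count ζ' a L hL hend hdisj hgood2
    obtain ⟨dstar, hdstar⟩ := FloodAux.pigeon ζ' (by rw [hC]; exact hcpos)
    obtain ⟨ms2, hlen2, hfl2⟩ := FloodAux.flood_to_target
      ((FloodAux.startsD ζ' dstar).card) t ζ' dstar le_rfl
    have hchain : floodCostMin (SimpleGraph.pathGraph t) ω ≤ ms1.length + ms2.length := by
      have hfl : ∀ v, floodSeq (SimpleGraph.pathGraph t) (ms1 ++ ms2) ω v = dstar := by
        intro v
        rw [FloodAux.floodSeq_append]
        exact hfl2 v
      have h1 := FloodAux.floodCost_le (SimpleGraph.pathGraph t) ω dstar (ms1 ++ ms2) hfl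
      have h2 := FloodAux.floodCostMin_le (SimpleGraph.pathGraph t) ω dstar
      rw [List.length_append] at h1
      omega
    have hcount : (FloodAux.startsD ζ' dstar).card
        ≤ (t - ∑ i, (L i - 1)) - ((t - ∑ i, (L i - 1)) + c - 1) / c := by
      have hBd := FloodAux.startsD_card ζ' dstar
      have hceil : ((FloodAux.starts ζ').card + c - 1) / c
          ≤ ((FloodAux.starts ζ').filter (fun v => ζ' v = dstar)).card := by
        apply FloodAux.ceil_le_of_le_mul hcpos
        rw [← hC]
        exact hdstar
      have hmono := FloodAux.ceil_monotone (x := (FloodAux.starts ζ').card)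
        (y := t - ∑ i, (L i - 1)) hcpos (by omega)
      set q1 : ℕ := ((FloodAux.starts ζ').card + c - 1) / c with hq1
      set q2 : ℕ := ((t - ∑ i, (L i - 1)) + c - 1) / c with hq2
      omega
    have htotal : ms1.length + ms2.length
        ≤ (∑ i, floodCostMin (SimpleGraph.pathGraph (L i))
            (fun k => ω ⟨a i + (k : ℕ), by have h1 := k.isLt; have h2 := hend i; omega⟩))
          + ((t - ∑ i, (L i - 1)) - ((t - ∑ i, (L i - 1)) + c - 1) / c) :=
      Nat.add_le_add hlen1 (le_trans hlen2 hcount)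
    refine le_trans hchain (le_trans htotal (le_of_eq (Nat.add_comm _ _)))
end
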